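/- arXiv:1709.08874 — 6 statements merged into one kernel-verified Lean document; each statement's English description precedes it below -/
import Mathlib

section
/- The sabra shell bilinear map B satisfies |B(u,v)| ≤ C₁ |u| ‖v‖_V for all u ∈ H and v ∈ V, where C₁ = |a|(λ^{-1}+λ) + |b|(λ^{-1}+1). -/
/-- The sabra shell model bilinear map `B(u,v)`, with the convention
`u₀ = u₋₁ = v₀ = v₋₁ = 0` (the entry at `n = 0` is set to `0` and negative
indices are handled by truncated subtraction together with the hypothesis
`u 0 = 0`). -/
noncomputable def shellB (k : ℕ → ℝ) (a b : ℝ) (u v : ℕ → ℂ) : ℕ → ℂ := fun n =>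
  if n = 0 then 0 else
    (-Complex.I) * ((a : ℂ) * (k (n + 1) : ℂ) * v (n + 2) * (starRingEnd ℂ) (u (n + 1))
      + (b : ℂ) * (k n : ℂ) * v (n + 1) * (starRingEnd ℂ) (u (n - 1))
      + (a : ℂ) * (k (n - 1) : ℂ) * u (n - 1) * v (n - 2)
      + (b : ℂ) * (k (n - 1) : ℂ) * v (n - 1) * u (n - 2))

/-- Cauchy–Schwarz for tsums of nonnegative reals. -/
lemma tsum_mul_le_sqrt_mul_sqrt_aux (f g : ℕ → ℝ)
    (hf : Summable (fun n => f n ^ 2)) (hg : Summable (fun n => g n ^ 2))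
    (hf0 : ∀ n, 0 ≤ f n) (hg0 : ∀ n, 0 ≤ g n) :
    ∑' n, f n * g n ≤ Real.sqrt (∑' n, f n ^ 2) * Real.sqrt (∑' n, g n ^ 2) := by
  have hfg : Summable (fun n => f n * g n) := by
    apply Summable.of_nonneg_of_le (fun n => mul_nonneg (hf0 n) (hg0 n))
      (fun n => ?_) (((hf.add hg).div_const 2))
    show f n * g n ≤ (f n ^ 2 + g n ^ 2) / 2
    nlinarith [sq_nonneg (f n - g n)]
  refine Summable.tsum_le_of_sum_le hfg (fun s => ?_)
  have h1 : (∑ i ∈ s, f i * g i) ^ 2 ≤ (∑ i ∈ s, f i ^ 2) * ∑ i ∈ s, g i ^ 2 :=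
    Finset.sum_mul_sq_le_sq_mul_sq s f g
  have h2 : (∑ i ∈ s, f i ^ 2) ≤ ∑' n, f n ^ 2 :=
    Summable.sum_le_tsum s (fun n _ => sq_nonneg _) hf
  have h3 : (∑ i ∈ s, g i ^ 2) ≤ ∑' n, g n ^ 2 :=
    Summable.sum_le_tsum s (fun n _ => sq_nonneg _) hg
  have hs0 : 0 ≤ ∑ i ∈ s, f i * g i :=
    Finset.sum_nonneg fun i _ => mul_nonneg (hf0 i) (hg0 i)
  have := Real.sqrt_le_sqrt (h1.trans (mul_le_mul h2 h3 (Finset.sum_nonneg fun i _ => sq_nonneg _)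
    (tsum_nonneg fun n => sq_nonneg _)))
  rwa [Real.sqrt_sq hs0, Real.sqrt_mul (tsum_nonneg fun n => sq_nonneg _)] at this

/-- Minkowski inequality for ℓ² tsums of nonnegative sequences. -/
lemma sqrt_tsum_add_sq_le (f g : ℕ → ℝ)
    (hf0 : ∀ n, 0 ≤ f n) (hg0 : ∀ n, 0 ≤ g n)
    (hf : Summable (fun n => f n ^ 2)) (hg : Summable (fun n => g n ^ 2)) :
    Real.sqrt (∑' n, (f n + g n) ^ 2)
      ≤ Real.sqrt (∑' n, f n ^ 2) + Real.sqrt (∑' n, g n ^ 2) := by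
  set A := ∑' n, f n ^ 2 with hA
  set B := ∑' n, g n ^ 2 with hB
  have hA0 : 0 ≤ A := tsum_nonneg fun n => sq_nonneg _
  have hB0 : 0 ≤ B := tsum_nonneg fun n => sq_nonneg _
  have hfg : Summable (fun n => f n * g n) := by
    apply Summable.of_nonneg_of_le (fun n => mul_nonneg (hf0 n) (hg0 n))
      (fun n => ?_) (((hf.add hg).div_const 2))
    show f n * g n ≤ (f n ^ 2 + g n ^ 2) / 2
    nlinarith [sq_nonneg (f n - g n)]
  have hsum : Summable (fun n => (f n + g n) ^ 2) := by
    have : (fun n => (f n + g n) ^ 2) = fun n => f n ^ 2 + 2 * (f n * g n) + g n ^ 2 := by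
      funext n; ring
    rw [this]
    exact (hf.add (hfg.mul_left 2)).add hg
  have key : ∑' n, (f n + g n) ^ 2 ≤ (Real.sqrt A + Real.sqrt B) ^ 2 := by
    have expand : ∑' n, (f n + g n) ^ 2 = A + 2 * (∑' n, f n * g n) + B := by
      rw [hA, hB]
      calc ∑' n, (f n + g n) ^ 2
          = ∑' n, (f n ^ 2 + 2 * (f n * g n) + g n ^ 2) := by
            congr 1; funext n; ring
        _ = (∑' n, (f n ^ 2 + 2 * (f n * g n))) + ∑' n, g n ^ 2 := by
            rw [Summable.tsum_add (hf.add (hfg.mul_left 2)) hg]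
        _ = (∑' n, f n ^ 2) + 2 * (∑' n, f n * g n) + ∑' n, g n ^ 2 := by
            rw [Summable.tsum_add hf (hfg.mul_left 2), tsum_mul_left]
    have hcs : ∑' n, f n * g n ≤ Real.sqrt A * Real.sqrt B :=
      tsum_mul_le_sqrt_mul_sqrt_aux f g hf hg hf0 hg0
    have : (Real.sqrt A + Real.sqrt B) ^ 2
        = A + 2 * (Real.sqrt A * Real.sqrt B) + B := by
      rw [add_sq, Real.sq_sqrt hA0, Real.sq_sqrt hB0]; ring
    rw [expand, this]
    linarith
  calc Real.sqrt (∑' n, (f n + g n) ^ 2) ≤ Real.sqrt ((Real.sqrt A + Real.sqrt B) ^ 2) :=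
        Real.sqrt_le_sqrt key
    _ = Real.sqrt A + Real.sqrt B :=
        Real.sqrt_sq (by positivity)

set_option maxHeartbeats 1000000 in
/-- `|B(u,v)| ≤ C₁ |u| ‖v‖_V` with
`C₁ = |a|(λ⁻¹+λ) + |b|(λ⁻¹+1)`. -/
theorem shellB_bound_H_V (k0 lam a b : ℝ) (hk0 : 0 < k0) (hlam : 1 < lam)
    (k : ℕ → ℝ) (hk : ∀ n, k n = k0 * lam ^ n)
    (u v : ℕ → ℂ) (hu0 : u 0 = 0) (hv0 : v 0 = 0)
    (hu : Summable (fun n => ‖u n‖ ^ 2))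
    (hv : Summable (fun n => (k n) ^ 2 * ‖v n‖ ^ 2)) :
    Real.sqrt (∑' n, ‖shellB k a b u v n‖ ^ 2)
      ≤ (|a| * (lam⁻¹ + lam) + |b| * (lam⁻¹ + 1))
          * Real.sqrt (∑' n, ‖u n‖ ^ 2)
          * Real.sqrt (∑' n, (k n) ^ 2 * ‖v n‖ ^ 2) := by
  have hlam0 : (0:ℝ) < lam := lt_trans one_pos hlam
  have hkpos : ∀ n, 0 < k n := fun n => by
    rw [hk]; exact mul_pos hk0 (pow_pos hlam0 n)
  have hkmono : ∀ n : ℕ, k (n - 1) ≤ lam * k (n - 2) := by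
    intro n
    rcases Nat.lt_or_ge n 2 with h | h
    · have e1 : n - 1 = 0 := by omega
      have e2 : n - 2 = 0 := by omega
      rw [e1, e2]
      nlinarith [hkpos 0]
    · have e1 : n - 1 = (n - 2) + 1 := by omega
      rw [e1, hk, hk, pow_succ]
      exact le_of_eq (by ring)
  set U := Real.sqrt (∑' n, ‖u n‖ ^ 2) with hUdef
  set W := Real.sqrt (∑' n, (k n) ^ 2 * ‖v n‖ ^ 2) with hWdef
  have hU0 : 0 ≤ U := Real.sqrt_nonneg _
  have hW0 : 0 ≤ W := Real.sqrt_nonneg _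
  -- pointwise bound on each entry of u by U
  have hUbd : ∀ m, ‖u m‖ ≤ U := by
    intro m
    have h1 : ‖u m‖ ^ 2 ≤ ∑' n, ‖u n‖ ^ 2 := Summable.le_tsum hu m (fun n _ => sq_nonneg _)
    have := Real.sqrt_le_sqrt h1
    rwa [Real.sqrt_sq (norm_nonneg _)] at this
  -- the weighted sequence
  set g : ℕ → ℝ := fun n => k n * ‖v n‖ with hgdef
  have hg0 : ∀ n, 0 ≤ g n := fun n => mul_nonneg (hkpos n).le (norm_nonneg _)
  have hgsq : (fun n => g n ^ 2) = fun n => (k n) ^ 2 * ‖v n‖ ^ 2 := by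
    funext n; rw [hgdef]; ring
  have hgsum : Summable (fun n => g n ^ 2) := by rw [hgsq]; exact hv
  have hgts : ∑' n, g n ^ 2 = W ^ 2 := by
    rw [hgsq, hWdef, Real.sq_sqrt (tsum_nonneg fun n => by positivity)]
  -- the four component sequences
  set g1 : ℕ → ℝ := fun n => g (n + 2) with hg1def
  set g2 : ℕ → ℝ := fun n => g (n + 1) with hg2def
  set g3 : ℕ → ℝ := fun n => g (n - 2) with hg3def
  set g4 : ℕ → ℝ := fun n => g (n - 1) with hg4def
  have hg1sum : Summable (fun n => g1 n ^ 2) :=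
    ((summable_nat_add_iff 2).2 hgsum :)
  have hg2sum : Summable (fun n => g2 n ^ 2) :=
    ((summable_nat_add_iff 1).2 hgsum :)
  have hg3sum : Summable (fun n => g3 n ^ 2) := by
    rw [← summable_nat_add_iff 2]
    simpa [hg3def] using hgsum
  have hg4sum : Summable (fun n => g4 n ^ 2) := by
    rw [← summable_nat_add_iff 1]
    simpa [hg4def] using hgsum
  have hgzero : g 0 = 0 := by rw [hgdef]; simp [hv0]
  -- tsums of shifted squares are bounded by W^2
  have ht1 : ∑' n, g1 n ^ 2 ≤ W ^ 2 := by
    rw [← hgts]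
    calc ∑' n, g1 n ^ 2 = ∑' n, (fun m => g m ^ 2) (n + 2) := rfl
      _ ≤ ∑' n, g n ^ 2 := by
          have := Summable.sum_add_tsum_nat_add (f := fun m => g m ^ 2) 2 hgsum
          have hnn : 0 ≤ ∑ i ∈ Finset.range 2, g i ^ 2 :=
            Finset.sum_nonneg fun i _ => sq_nonneg _
          linarith
  have ht2 : ∑' n, g2 n ^ 2 ≤ W ^ 2 := by
    rw [← hgts]
    calc ∑' n, g2 n ^ 2 = ∑' n, (fun m => g m ^ 2) (n + 1) := rfl
      _ ≤ ∑' n, g n ^ 2 := by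
          have := Summable.sum_add_tsum_nat_add (f := fun m => g m ^ 2) 1 hgsum
          have hnn : 0 ≤ ∑ i ∈ Finset.range 1, g i ^ 2 :=
            Finset.sum_nonneg fun i _ => sq_nonneg _
          linarith
  have ht3 : ∑' n, g3 n ^ 2 ≤ W ^ 2 := by
    rw [← hgts]
    have e1 : ∑' n, g3 n ^ 2 = g3 0 ^ 2 + ∑' n, g3 (n + 1) ^ 2 :=
      Summable.tsum_eq_zero_add hg3sum
    have e2 : ∑' n, g3 (n + 1) ^ 2 = g3 1 ^ 2 + ∑' n, g3 (n + 2) ^ 2 := by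
      have : Summable (fun n => g3 (n + 1) ^ 2) := (summable_nat_add_iff 1).2 hg3sum
      simpa [add_assoc] using Summable.tsum_eq_zero_add this
    have h30 : g3 0 = 0 := by simp [hg3def, hgzero]
    have h31 : g3 1 = 0 := by simp [hg3def, hgzero]
    have h3s : ∀ n, g3 (n + 2) = g n := fun n => by simp [hg3def]
    rw [e1, e2]
    simp only [h30, h31, h3s]
    simp
  have ht4 : ∑' n, g4 n ^ 2 ≤ W ^ 2 := by
    rw [← hgts]
    have e1 : ∑' n, g4 n ^ 2 = g4 0 ^ 2 + ∑' n, g4 (n + 1) ^ 2 :=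
      Summable.tsum_eq_zero_add hg4sum
    have h40 : g4 0 = 0 := by simp [hg4def, hgzero]
    have h4s : ∀ n, g4 (n + 1) = g n := fun n => by simp [hg4def]
    rw [e1, h40]
    simp only [h4s]
    simp
  -- constants
  set c1 := |a| * lam⁻¹ * U with hc1
  set c2 := |b| * lam⁻¹ * U with hc2
  set c3 := |a| * lam * U with hc3
  set c4 := |b| * U with hc4
  have hc10 : 0 ≤ c1 := by positivity
  have hc20 : 0 ≤ c2 := by positivity
  have hc30 : 0 ≤ c3 := by positivity
  have hc40 : 0 ≤ c4 := by positivity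
  -- the dominating sequence
  set F : ℕ → ℝ := fun n => c1 * g1 n + c2 * g2 n + c3 * g3 n + c4 * g4 n with hFdef
  have hg10 : ∀ n, 0 ≤ g1 n := fun n => hg0 _
  have hg20 : ∀ n, 0 ≤ g2 n := fun n => hg0 _
  have hg30 : ∀ n, 0 ≤ g3 n := fun n => hg0 _
  have hg40 : ∀ n, 0 ≤ g4 n := fun n => hg0 _
  clear_value U W g g1 g2 g3 g4 c1 c2 c3 c4 F
  -- pointwise bound
  have hpt : ∀ n, ‖shellB k a b u v n‖ ≤ F n := by
    have hlamne : lam ≠ 0 := ne_of_gt hlam0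
    intro n
    have hF0n : F n = c1 * g1 n + c2 * g2 n + c3 * g3 n + c4 * g4 n := by rw [hFdef]
    rcases eq_or_ne n 0 with rfl | hn
    · have hz : shellB k a b u v 0 = 0 := by simp [shellB]
      rw [hz, norm_zero, hF0n]
      exact add_nonneg (add_nonneg (add_nonneg (mul_nonneg hc10 (hg10 _))
        (mul_nonneg hc20 (hg20 _))) (mul_nonneg hc30 (hg30 _))) (mul_nonneg hc40 (hg40 _))
    · simp only [shellB, if_neg hn]
      rw [norm_mul]
      have hInorm : ‖(-Complex.I)‖ = 1 := by simp
      rw [hInorm, one_mul]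
      have habs : ∀ (x y z w : ℂ), ‖x + y + z + w‖ ≤ ‖x‖ + ‖y‖ + ‖z‖ + ‖w‖ := by
        intro x y z w
        calc ‖x + y + z + w‖ ≤ ‖x + y + z‖ + ‖w‖ := norm_add_le _ _
          _ ≤ ‖x + y‖ + ‖z‖ + ‖w‖ := by gcongr; exact norm_add_le _ _
          _ ≤ ‖x‖ + ‖y‖ + ‖z‖ + ‖w‖ := by gcongr; exact norm_add_le _ _
      refine le_trans (habs _ _ _ _) ?_
      have hnorm4 : ∀ (x y : ℝ) (z w : ℂ), ‖(x : ℂ) * (y : ℂ) * z * w‖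
          = |x| * |y| * ‖z‖ * ‖w‖ := by
        intro x y z w
        rw [norm_mul, norm_mul, norm_mul, Complex.norm_real, Complex.norm_real,
          Real.norm_eq_abs, Real.norm_eq_abs]
      have hn1 : ‖(a : ℂ) * (k (n + 1) : ℂ) * v (n + 2) * (starRingEnd ℂ) (u (n + 1))‖
          ≤ c1 * g1 n := by
        rw [hnorm4, RCLike.norm_conj]
        have hkk : k (n + 1) = lam⁻¹ * k (n + 2) := by
          rw [hk, hk, pow_succ]
          field_simp
          ring
        calc |a| * |k (n + 1)| * ‖v (n + 2)‖ * ‖u (n + 1)‖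
            = (|a| * lam⁻¹ * (k (n + 2) * ‖v (n + 2)‖)) * ‖u (n + 1)‖ := by
              rw [abs_of_pos (hkpos _), hkk]; ring
          _ ≤ (|a| * lam⁻¹ * (k (n + 2) * ‖v (n + 2)‖)) * U := by
              have h0 : 0 ≤ |a| * lam⁻¹ * (k (n + 2) * ‖v (n + 2)‖) :=
                mul_nonneg (mul_nonneg (abs_nonneg a) (inv_nonneg.2 hlam0.le))
                  (mul_nonneg (hkpos _).le (norm_nonneg _))
              exact mul_le_mul_of_nonneg_left (hUbd _) h0
          _ = c1 * g1 n := by rw [hc1, hg1def, hgdef]; ring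
      have hn2 : ‖(b : ℂ) * (k n : ℂ) * v (n + 1) * (starRingEnd ℂ) (u (n - 1))‖
          ≤ c2 * g2 n := by
        rw [hnorm4, RCLike.norm_conj]
        have hkk : k n = lam⁻¹ * k (n + 1) := by
          rw [hk, hk, pow_succ]
          field_simp
        calc |b| * |k n| * ‖v (n + 1)‖ * ‖u (n - 1)‖
            = (|b| * lam⁻¹ * (k (n + 1) * ‖v (n + 1)‖)) * ‖u (n - 1)‖ := by
              rw [abs_of_pos (hkpos _), hkk]; ring
          _ ≤ (|b| * lam⁻¹ * (k (n + 1) * ‖v (n + 1)‖)) * U := by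
              have h0 : 0 ≤ |b| * lam⁻¹ * (k (n + 1) * ‖v (n + 1)‖) :=
                mul_nonneg (mul_nonneg (abs_nonneg b) (inv_nonneg.2 hlam0.le))
                  (mul_nonneg (hkpos _).le (norm_nonneg _))
              exact mul_le_mul_of_nonneg_left (hUbd _) h0
          _ = c2 * g2 n := by rw [hc2, hg2def, hgdef]; ring
      have hn3 : ‖(a : ℂ) * (k (n - 1) : ℂ) * u (n - 1) * v (n - 2)‖ ≤ c3 * g3 n := by
        rw [hnorm4]
        calc |a| * |k (n - 1)| * ‖u (n - 1)‖ * ‖v (n - 2)‖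
            = |a| * (k (n - 1) * ‖v (n - 2)‖) * ‖u (n - 1)‖ := by
              rw [abs_of_pos (hkpos _)]; ring
          _ ≤ |a| * (lam * (k (n - 2) * ‖v (n - 2)‖)) * ‖u (n - 1)‖ := by
              have h3 : k (n - 1) * ‖v (n - 2)‖ ≤ lam * (k (n - 2) * ‖v (n - 2)‖) := by
                rw [← mul_assoc]
                exact mul_le_mul_of_nonneg_right (hkmono n) (norm_nonneg _)
              exact mul_le_mul_of_nonneg_right
                (mul_le_mul_of_nonneg_left h3 (abs_nonneg a)) (norm_nonneg _)
          _ ≤ |a| * (lam * (k (n - 2) * ‖v (n - 2)‖)) * U := by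
              have h0 : 0 ≤ |a| * (lam * (k (n - 2) * ‖v (n - 2)‖)) :=
                mul_nonneg (abs_nonneg a)
                  (mul_nonneg hlam0.le (mul_nonneg (hkpos _).le (norm_nonneg _)))
              exact mul_le_mul_of_nonneg_left (hUbd _) h0
          _ = c3 * g3 n := by rw [hc3, hg3def, hgdef]; ring
      have hn4 : ‖(b : ℂ) * (k (n - 1) : ℂ) * v (n - 1) * u (n - 2)‖ ≤ c4 * g4 n := by
        rw [hnorm4]
        calc |b| * |k (n - 1)| * ‖v (n - 1)‖ * ‖u (n - 2)‖
            = (|b| * (k (n - 1) * ‖v (n - 1)‖)) * ‖u (n - 2)‖ := by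
              rw [abs_of_pos (hkpos _)]; ring
          _ ≤ (|b| * (k (n - 1) * ‖v (n - 1)‖)) * U := by
              have h0 : 0 ≤ |b| * (k (n - 1) * ‖v (n - 1)‖) :=
                mul_nonneg (abs_nonneg b)
                  (mul_nonneg (hkpos _).le (norm_nonneg _))
              exact mul_le_mul_of_nonneg_left (hUbd _) h0
          _ = c4 * g4 n := by rw [hc4, hg4def, hgdef]; ring
      rw [hF0n]
      linarith
  -- summability pieces for the scaled sequences
  have hc1g : Summable (fun n => (c1 * g1 n) ^ 2) := by
    simpa [mul_pow] using hg1sum.mul_left (c1 ^ 2)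
  have hc2g : Summable (fun n => (c2 * g2 n) ^ 2) := by
    simpa [mul_pow] using hg2sum.mul_left (c2 ^ 2)
  have hc3g : Summable (fun n => (c3 * g3 n) ^ 2) := by
    simpa [mul_pow] using hg3sum.mul_left (c3 ^ 2)
  have hc4g : Summable (fun n => (c4 * g4 n) ^ 2) := by
    simpa [mul_pow] using hg4sum.mul_left (c4 ^ 2)
  have hF0 : ∀ n, 0 ≤ F n := fun n => le_trans (norm_nonneg _) (hpt n)
  have h12sum : Summable (fun n => (c1 * g1 n + c2 * g2 n) ^ 2) := by
    have : (fun n => (c1 * g1 n + c2 * g2 n) ^ 2)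
        = fun n => (c1 * g1 n) ^ 2 + 2 * ((c1 * g1 n) * (c2 * g2 n)) + (c2 * g2 n) ^ 2 := by
      funext n; ring
    rw [this]
    have hmul : Summable (fun n => (c1 * g1 n) * (c2 * g2 n)) := by
      apply Summable.of_nonneg_of_le
        (fun n => mul_nonneg (mul_nonneg hc10 (hg10 _)) (mul_nonneg hc20 (hg20 _)))
        (fun n => ?_) ((hc1g.add hc2g).div_const 2)
      show (c1 * g1 n) * (c2 * g2 n) ≤ ((c1 * g1 n) ^ 2 + (c2 * g2 n) ^ 2) / 2
      nlinarith [sq_nonneg (c1 * g1 n - c2 * g2 n)]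
    exact (hc1g.add (hmul.mul_left 2)).add hc2g
  have h123sum : Summable (fun n => (c1 * g1 n + c2 * g2 n + c3 * g3 n) ^ 2) := by
    have : (fun n => (c1 * g1 n + c2 * g2 n + c3 * g3 n) ^ 2)
        = fun n => (c1 * g1 n + c2 * g2 n) ^ 2
            + 2 * ((c1 * g1 n + c2 * g2 n) * (c3 * g3 n)) + (c3 * g3 n) ^ 2 := by
      funext n; ring
    rw [this]
    have hmul : Summable (fun n => (c1 * g1 n + c2 * g2 n) * (c3 * g3 n)) := by
      apply Summable.of_nonneg_of_le
        (fun n => mul_nonneg (add_nonneg (mul_nonneg hc10 (hg10 _)) (mul_nonneg hc20 (hg20 _))) (mul_nonneg hc30 (hg30 _)))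
        (fun n => ?_) ((h12sum.add hc3g).div_const 2)
      show (c1 * g1 n + c2 * g2 n) * (c3 * g3 n)
        ≤ ((c1 * g1 n + c2 * g2 n) ^ 2 + (c3 * g3 n) ^ 2) / 2
      nlinarith [sq_nonneg ((c1 * g1 n + c2 * g2 n) - c3 * g3 n)]
    exact (h12sum.add (hmul.mul_left 2)).add hc3g
  have hFsum : Summable (fun n => F n ^ 2) := by
    have : (fun n => F n ^ 2)
        = fun n => (c1 * g1 n + c2 * g2 n + c3 * g3 n) ^ 2
            + 2 * ((c1 * g1 n + c2 * g2 n + c3 * g3 n) * (c4 * g4 n)) + (c4 * g4 n) ^ 2 := by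
      funext n; rw [hFdef]; ring
    rw [this]
    have hmul : Summable (fun n => (c1 * g1 n + c2 * g2 n + c3 * g3 n) * (c4 * g4 n)) := by
      apply Summable.of_nonneg_of_le
        (fun n => mul_nonneg
          (add_nonneg (add_nonneg (mul_nonneg hc10 (hg10 _)) (mul_nonneg hc20 (hg20 _)))
            (mul_nonneg hc30 (hg30 _)))
          (mul_nonneg hc40 (hg40 _)))
        (fun n => ?_) ((h123sum.add hc4g).div_const 2)
      show (c1 * g1 n + c2 * g2 n + c3 * g3 n) * (c4 * g4 n)
        ≤ ((c1 * g1 n + c2 * g2 n + c3 * g3 n) ^ 2 + (c4 * g4 n) ^ 2) / 2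
      nlinarith [sq_nonneg ((c1 * g1 n + c2 * g2 n + c3 * g3 n) - c4 * g4 n)]
    exact (h123sum.add (hmul.mul_left 2)).add hc4g
  -- step 1: ∑‖B‖² ≤ ∑F²
  have hBsum : Summable (fun n => ‖shellB k a b u v n‖ ^ 2) :=
    Summable.of_nonneg_of_le (fun n => sq_nonneg _)
      (fun n => pow_le_pow_left₀ (norm_nonneg _) (hpt n) 2) hFsum
  have step1 : Real.sqrt (∑' n, ‖shellB k a b u v n‖ ^ 2) ≤ Real.sqrt (∑' n, F n ^ 2) := by
    apply Real.sqrt_le_sqrt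
    exact Summable.tsum_le_tsum (fun n => pow_le_pow_left₀ (norm_nonneg _) (hpt n) 2) hBsum hFsum
  -- step 2: Minkowski (three applications)
  have mink12 : Real.sqrt (∑' n, (c1 * g1 n + c2 * g2 n) ^ 2)
      ≤ Real.sqrt (∑' n, (c1 * g1 n) ^ 2) + Real.sqrt (∑' n, (c2 * g2 n) ^ 2) :=
    sqrt_tsum_add_sq_le _ _ (fun n => mul_nonneg hc10 (hg10 _))
      (fun n => mul_nonneg hc20 (hg20 _)) hc1g hc2g
  have mink123 : Real.sqrt (∑' n, (c1 * g1 n + c2 * g2 n + c3 * g3 n) ^ 2)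
      ≤ Real.sqrt (∑' n, (c1 * g1 n + c2 * g2 n) ^ 2)
        + Real.sqrt (∑' n, (c3 * g3 n) ^ 2) :=
    sqrt_tsum_add_sq_le _ _
      (fun n => add_nonneg (mul_nonneg hc10 (hg10 _)) (mul_nonneg hc20 (hg20 _)))
      (fun n => mul_nonneg hc30 (hg30 _)) h12sum hc3g
  have minkF : Real.sqrt (∑' n, F n ^ 2)
      ≤ Real.sqrt (∑' n, (c1 * g1 n + c2 * g2 n + c3 * g3 n) ^ 2)
        + Real.sqrt (∑' n, (c4 * g4 n) ^ 2) := by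
    have := sqrt_tsum_add_sq_le (fun n => c1 * g1 n + c2 * g2 n + c3 * g3 n)
      (fun n => c4 * g4 n)
      (fun n => add_nonneg (add_nonneg (mul_nonneg hc10 (hg10 _)) (mul_nonneg hc20 (hg20 _)))
        (mul_nonneg hc30 (hg30 _)))
      (fun n => mul_nonneg hc40 (hg40 _)) h123sum hc4g
    simpa [hFdef] using this
  -- step 3: bound each piece
  have piece : ∀ (c : ℝ) (gg : ℕ → ℝ), 0 ≤ c → (∀ n, 0 ≤ gg n) →
      Summable (fun n => gg n ^ 2) → (∑' n, gg n ^ 2 ≤ W ^ 2) →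
      Real.sqrt (∑' n, (c * gg n) ^ 2) ≤ c * W := by
    intro c gg hc hgg hsum hts
    have h1 : ∑' n, (c * gg n) ^ 2 = c ^ 2 * ∑' n, gg n ^ 2 := by
      rw [← tsum_mul_left]
      congr 1; funext n; ring
    rw [h1]
    have h2 : c ^ 2 * (∑' n, gg n ^ 2) ≤ c ^ 2 * W ^ 2 :=
      mul_le_mul_of_nonneg_left hts (sq_nonneg c)
    calc Real.sqrt (c ^ 2 * ∑' n, gg n ^ 2) ≤ Real.sqrt (c ^ 2 * W ^ 2) :=
          Real.sqrt_le_sqrt h2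
      _ = c * W := by
          rw [← mul_pow, Real.sqrt_sq (mul_nonneg hc hW0)]
  have p1 := piece c1 g1 hc10 hg10 hg1sum ht1
  have p2 := piece c2 g2 hc20 hg20 hg2sum ht2
  have p3 := piece c3 g3 hc30 hg30 hg3sum ht3
  have p4 := piece c4 g4 hc40 hg40 hg4sum ht4
  have final : Real.sqrt (∑' n, F n ^ 2) ≤ c1 * W + c2 * W + c3 * W + c4 * W := by
    linarith
  have hconst : c1 * W + c2 * W + c3 * W + c4 * W
      = (|a| * (lam⁻¹ + lam) + |b| * (lam⁻¹ + 1)) * U * W := by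
    rw [hc1, hc2, hc3, hc4]; ring
  calc Real.sqrt (∑' n, ‖shellB k a b u v n‖ ^ 2)
      ≤ Real.sqrt (∑' n, F n ^ 2) := step1
    _ ≤ c1 * W + c2 * W + c3 * W + c4 * W := final
    _ = (|a| * (lam⁻¹ + lam) + |b| * (lam⁻¹ + 1)) * U * W := hconst
end

section
/- The sabra shell bilinear map B satisfies |B(u,v)| ≤ C₂ ‖u‖_V |v| for all u ∈ V and v ∈ H, where C₂ = 2|a| + 2λ|b|. -/
open Real in
lemma cs_tsum_aux (f g : ℕ → ℝ) (hf0 : ∀ n, 0 ≤ f n) (hg0 : ∀ n, 0 ≤ g n)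
    (hf : Summable (fun n => f n ^ 2)) (hg : Summable (fun n => g n ^ 2)) :
    Summable (fun n => f n * g n) ∧
      ∑' n, f n * g n ≤ √(∑' n, f n ^ 2) * √(∑' n, g n ^ 2) := by
  have hsum : Summable (fun n => f n * g n) := by
    refine Summable.of_nonneg_of_le (fun n => mul_nonneg (hf0 n) (hg0 n)) (fun n => ?_) (hf.add hg)
    nlinarith [sq_nonneg (f n - g n)]
  refine ⟨hsum, Summable.tsum_le_of_sum_le hsum fun s => ?_⟩
  refine (Real.sum_mul_le_sqrt_mul_sqrt s f g).trans ?_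
  gcongr
  · exact Summable.sum_le_tsum s (fun n _ => sq_nonneg _) hf
  · exact Summable.sum_le_tsum s (fun n _ => sq_nonneg _) hg

open Real in
lemma mink_tsum_aux (f g : ℕ → ℝ) (hf0 : ∀ n, 0 ≤ f n) (hg0 : ∀ n, 0 ≤ g n)
    (hf : Summable (fun n => f n ^ 2)) (hg : Summable (fun n => g n ^ 2)) :
    Summable (fun n => (f n + g n) ^ 2) ∧
      √(∑' n, (f n + g n) ^ 2) ≤ √(∑' n, f n ^ 2) + √(∑' n, g n ^ 2) := by
  obtain ⟨hfg, hcs⟩ := cs_tsum_aux f g hf0 hg0 hf hg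
  have hsum : Summable (fun n => (f n + g n) ^ 2) := by
    have := (hf.add ((hfg.mul_left 2).add hg))
    refine this.congr fun n => by ring
  refine ⟨hsum, ?_⟩
  set F := √(∑' n, f n ^ 2)
  set G := √(∑' n, g n ^ 2)
  have hF : 0 ≤ F := Real.sqrt_nonneg _
  have hG : 0 ≤ G := Real.sqrt_nonneg _
  have hFs : ∑' n, f n ^ 2 = F ^ 2 := (Real.sq_sqrt (tsum_nonneg fun n => sq_nonneg _)).symm
  have hGs : ∑' n, g n ^ 2 = G ^ 2 := (Real.sq_sqrt (tsum_nonneg fun n => sq_nonneg _)).symm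
  have key : ∑' n, (f n + g n) ^ 2 ≤ (F + G) ^ 2 := by
    have heq : ∑' n, (f n + g n) ^ 2
        = (∑' n, f n ^ 2) + ((2 * ∑' n, f n * g n) + ∑' n, g n ^ 2) := by
      rw [← tsum_mul_left, ← Summable.tsum_add (hfg.mul_left 2) hg,
        ← Summable.tsum_add hf ((hfg.mul_left 2).add hg)]
      exact tsum_congr fun n => by ring
    rw [heq, hFs, hGs]
    nlinarith [hcs]
  calc √(∑' n, (f n + g n) ^ 2) ≤ √((F + G) ^ 2) := Real.sqrt_le_sqrt key
    _ = F + G := Real.sqrt_sq (by positivity)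

lemma shift1_aux (w : ℕ → ℝ) (hw : Summable w) (h0 : w 0 = 0) :
    Summable (fun n => w (n - 1)) ∧ ∑' n, w (n - 1) = ∑' n, w n := by
  have hs : Summable (fun n : ℕ => w (n + 1 - 1)) := by simpa using hw
  have hsum : Summable (fun n : ℕ => w (n - 1)) := (summable_nat_add_iff 1).mp hs
  refine ⟨hsum, ?_⟩
  rw [Summable.tsum_eq_zero_add hsum]
  simp [h0]

lemma shift2_aux (w : ℕ → ℝ) (hw : Summable w) (h0 : w 0 = 0) :
    Summable (fun n => w (n - 2)) ∧ ∑' n, w (n - 2) = ∑' n, w n := by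
  obtain ⟨h1s, h1t⟩ := shift1_aux w hw h0
  have hkey : ∀ n : ℕ, n + 1 - 2 = n - 1 := fun n => by omega
  have hs : Summable (fun n : ℕ => w (n + 1 - 2)) := by
    refine h1s.congr fun n => ?_
    rw [hkey]
  have hsum : Summable (fun n : ℕ => w (n - 2)) := (summable_nat_add_iff 1).mp hs
  refine ⟨hsum, ?_⟩
  rw [Summable.tsum_eq_zero_add hsum]
  have : ∑' n : ℕ, w (n + 1 - 2) = ∑' n : ℕ, w (n - 1) := tsum_congr fun n => by rw [hkey]
  simp only [Nat.zero_sub, h0, zero_add] at *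
  rw [this, h1t]

open Real in
lemma term_bound_aux (c Vs S : ℝ) (hc : 0 ≤ c) (hVs : 0 ≤ Vs) (r q : ℕ → ℝ)
    (hq : ∀ n, q n ^ 2 ≤ Vs)
    (hr : Summable (fun n => r n ^ 2)) (hS : ∑' n, r n ^ 2 ≤ S) :
    Summable (fun n => (c * r n * q n) ^ 2) ∧
      √(∑' n, (c * r n * q n) ^ 2) ≤ c * √S * √Vs := by
  have hle : ∀ n, (c * r n * q n) ^ 2 ≤ c ^ 2 * Vs * r n ^ 2 := by
    intro n
    have h1 : (c * r n * q n) ^ 2 = c ^ 2 * r n ^ 2 * q n ^ 2 := by ring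
    have h2 : c ^ 2 * r n ^ 2 * q n ^ 2 ≤ c ^ 2 * r n ^ 2 * Vs := by
      have : (0:ℝ) ≤ c ^ 2 * r n ^ 2 := by positivity
      exact mul_le_mul_of_nonneg_left (hq n) this
    calc (c * r n * q n) ^ 2 = c ^ 2 * r n ^ 2 * q n ^ 2 := h1
      _ ≤ c ^ 2 * r n ^ 2 * Vs := h2
      _ = c ^ 2 * Vs * r n ^ 2 := by ring
  have hsum : Summable (fun n => (c * r n * q n) ^ 2) :=
    Summable.of_nonneg_of_le (fun n => sq_nonneg _) hle (hr.mul_left _)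
  refine ⟨hsum, ?_⟩
  have hT0 : (0:ℝ) ≤ ∑' n, r n ^ 2 := tsum_nonneg fun n => sq_nonneg _
  have hS0 : (0:ℝ) ≤ S := hT0.trans hS
  have hts : ∑' n, (c * r n * q n) ^ 2 ≤ c ^ 2 * S * Vs := by
    calc ∑' n, (c * r n * q n) ^ 2 ≤ ∑' n, c ^ 2 * Vs * r n ^ 2 :=
          Summable.tsum_le_tsum hle hsum (hr.mul_left _)
      _ = c ^ 2 * Vs * ∑' n, r n ^ 2 := tsum_mul_left
      _ ≤ c ^ 2 * Vs * S := mul_le_mul_of_nonneg_left hS (by positivity)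
      _ = c ^ 2 * S * Vs := by ring
  have h2 : (c * √S * √Vs) ^ 2 = c ^ 2 * S * Vs := by
    rw [mul_pow, mul_pow, Real.sq_sqrt hS0, Real.sq_sqrt hVs]
  calc √(∑' n, (c * r n * q n) ^ 2) ≤ √((c * √S * √Vs) ^ 2) := by
        rw [h2]; exact Real.sqrt_le_sqrt hts
    _ = c * √S * √Vs := Real.sqrt_sq (by positivity)

/-- `|B(u,v)| ≤ C₂ ‖u‖_V |v|` with `C₂ = 2|a| + 2λ|b|`. -/
theorem shellB_bound_V_H (k0 lam a b : ℝ) (hk0 : 0 < k0) (hlam : 1 < lam)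
    (k : ℕ → ℝ) (hk : ∀ n, k n = k0 * lam ^ n)
    (u v : ℕ → ℂ) (hu0 : u 0 = 0) (hv0 : v 0 = 0)
    (hu : Summable (fun n => (k n) ^ 2 * ‖u n‖ ^ 2))
    (hv : Summable (fun n => ‖v n‖ ^ 2)) :
    Real.sqrt (∑' n, ‖shellB k a b u v n‖ ^ 2)
      ≤ (2 * |a| + 2 * lam * |b|)
          * Real.sqrt (∑' n, (k n) ^ 2 * ‖u n‖ ^ 2)
          * Real.sqrt (∑' n, ‖v n‖ ^ 2) := by
  have hlam0 : (0:ℝ) < lam := lt_trans one_pos hlam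
  have hkpos : ∀ n, 0 < k n := fun n => by rw [hk]; positivity
  set Psq : ℕ → ℝ := fun n => (k n) ^ 2 * ‖u n‖ ^ 2 with hPsq
  have hP0 : Psq 0 = 0 := by simp [hPsq, hu0]
  set S : ℝ := ∑' n, Psq n with hSdef
  set Vs : ℝ := ∑' n, ‖v n‖ ^ 2 with hVsdef
  have hVs0 : 0 ≤ Vs := tsum_nonneg fun n => sq_nonneg _
  have hqV : ∀ m, ‖v m‖ ^ 2 ≤ Vs := fun m => Summable.le_tsum hv m fun j _ => sq_nonneg _
  have hstep : ∀ m, k (m + 1) = lam * k m := by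
    intro m; rw [hk, hk, pow_succ]; ring
  -- the four dominating sequences
  set g1 : ℕ → ℝ := fun n => |a| * (k (n+1) * ‖u (n+1)‖) * ‖v (n+2)‖ with hg1
  set g2 : ℕ → ℝ := fun n => (lam * |b|) * (k (n-1) * ‖u (n-1)‖) * ‖v (n+1)‖ with hg2
  set g3 : ℕ → ℝ := fun n => |a| * (k (n-1) * ‖u (n-1)‖) * ‖v (n-2)‖ with hg3
  set g4 : ℕ → ℝ := fun n => (lam * |b|) * (k (n-2) * ‖u (n-2)‖) * ‖v (n-1)‖ with hg4
  have hg10 : ∀ n, 0 ≤ g1 n := fun n => by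
    exact mul_nonneg (mul_nonneg (abs_nonneg _)
      (mul_nonneg (hkpos _).le (norm_nonneg _))) (norm_nonneg _)
  have hg20 : ∀ n, 0 ≤ g2 n := fun n => by
    exact mul_nonneg (mul_nonneg (mul_nonneg hlam0.le (abs_nonneg _))
      (mul_nonneg (hkpos _).le (norm_nonneg _))) (norm_nonneg _)
  have hg30 : ∀ n, 0 ≤ g3 n := fun n => by
    exact mul_nonneg (mul_nonneg (abs_nonneg _)
      (mul_nonneg (hkpos _).le (norm_nonneg _))) (norm_nonneg _)
  have hg40 : ∀ n, 0 ≤ g4 n := fun n => by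
    exact mul_nonneg (mul_nonneg (mul_nonneg hlam0.le (abs_nonneg _))
      (mul_nonneg (hkpos _).le (norm_nonneg _))) (norm_nonneg _)
  -- summability of shifted Psq
  have hrsq1 : ∀ n : ℕ, (k (n+1) * ‖u (n+1)‖) ^ 2 = Psq (n+1) := fun n => by
    rw [hPsq]; ring
  have hrsq2 : ∀ n : ℕ, (k (n-1) * ‖u (n-1)‖) ^ 2 = Psq (n-1) := fun n => by
    rw [hPsq]; ring
  have hrsq4 : ∀ n : ℕ, (k (n-2) * ‖u (n-2)‖) ^ 2 = Psq (n-2) := fun n => by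
    rw [hPsq]; ring
  have hsh1 : Summable (fun n : ℕ => Psq (n+1)) := (summable_nat_add_iff 1).mpr hu
  have hsh1t : ∑' n : ℕ, Psq (n+1) ≤ S := by
    refine Summable.tsum_le_tsum_of_inj (fun n => n + 1) (fun x y h => by simpa using h)
      (fun c _ => by positivity) (fun n => le_rfl) hsh1 hu
  obtain ⟨hsh2, hsh2t⟩ := shift1_aux Psq hu hP0
  obtain ⟨hsh4, hsh4t⟩ := shift2_aux Psq hu hP0
  have hr1 : Summable (fun n : ℕ => (k (n+1) * ‖u (n+1)‖) ^ 2) :=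
    hsh1.congr fun n => (hrsq1 n).symm
  have hS1 : ∑' n : ℕ, (k (n+1) * ‖u (n+1)‖) ^ 2 ≤ S := by
    rw [tsum_congr hrsq1]; exact hsh1t
  have hr2 : Summable (fun n : ℕ => (k (n-1) * ‖u (n-1)‖) ^ 2) :=
    hsh2.congr fun n => (hrsq2 n).symm
  have hS2 : ∑' n : ℕ, (k (n-1) * ‖u (n-1)‖) ^ 2 ≤ S := by
    rw [tsum_congr hrsq2]; exact le_of_eq hsh2t
  have hr4 : Summable (fun n : ℕ => (k (n-2) * ‖u (n-2)‖) ^ 2) :=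
    hsh4.congr fun n => (hrsq4 n).symm
  have hS4 : ∑' n : ℕ, (k (n-2) * ‖u (n-2)‖) ^ 2 ≤ S := by
    rw [tsum_congr hrsq4]; exact le_of_eq hsh4t
  -- bounds on each gᵢ
  obtain ⟨hs1, hb1⟩ := term_bound_aux |a| Vs S (abs_nonneg a) hVs0
    (fun n => k (n+1) * ‖u (n+1)‖) (fun n => ‖v (n+2)‖) (fun n => hqV _) hr1 hS1
  obtain ⟨hs2, hb2⟩ := term_bound_aux (lam * |b|) Vs S
    (mul_nonneg hlam0.le (abs_nonneg b)) hVs0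
    (fun n => k (n-1) * ‖u (n-1)‖) (fun n => ‖v (n+1)‖) (fun n => hqV _) hr2 hS2
  obtain ⟨hs3, hb3⟩ := term_bound_aux |a| Vs S (abs_nonneg a) hVs0
    (fun n => k (n-1) * ‖u (n-1)‖) (fun n => ‖v (n-2)‖) (fun n => hqV _) hr2 hS2
  obtain ⟨hs4, hb4⟩ := term_bound_aux (lam * |b|) Vs S
    (mul_nonneg hlam0.le (abs_nonneg b)) hVs0
    (fun n => k (n-2) * ‖u (n-2)‖) (fun n => ‖v (n-1)‖) (fun n => hqV _) hr4 hS4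
  -- Minkowski chain
  obtain ⟨hs12, hb12⟩ := mink_tsum_aux g1 g2 hg10 hg20 hs1 hs2
  obtain ⟨hs123, hb123⟩ := mink_tsum_aux (fun n => g1 n + g2 n) g3
    (fun n => add_nonneg (hg10 n) (hg20 n)) hg30 hs12 hs3
  obtain ⟨hs1234, hb1234⟩ := mink_tsum_aux (fun n => g1 n + g2 n + g3 n) g4
    (fun n => add_nonneg (add_nonneg (hg10 n) (hg20 n)) (hg30 n)) hg40 hs123 hs4
  -- pointwise bound
  have hpt : ∀ n, ‖shellB k a b u v n‖ ≤ g1 n + g2 n + g3 n + g4 n := by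
    intro n
    match n with
    | 0 =>
      have h0 : shellB k a b u v 0 = 0 := by simp [shellB]
      rw [h0, norm_zero]
      exact add_nonneg (add_nonneg (add_nonneg (hg10 0) (hg20 0)) (hg30 0)) (hg40 0)
    | (m+1) =>
      rw [shellB, if_neg (Nat.succ_ne_zero m)]
      rw [norm_mul, norm_neg, Complex.norm_I, one_mul]
      have h4 : ∀ (x y z w : ℂ), ‖x + y + z + w‖ ≤ ‖x‖ + ‖y‖ + ‖z‖ + ‖w‖ := by
        intro x y z w
        calc ‖x + y + z + w‖ ≤ ‖x + y + z‖ + ‖w‖ := norm_add_le _ _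
          _ ≤ (‖x + y‖ + ‖z‖) + ‖w‖ := add_le_add (norm_add_le _ _) le_rfl
          _ ≤ ((‖x‖ + ‖y‖) + ‖z‖) + ‖w‖ :=
            add_le_add (add_le_add (norm_add_le _ _) le_rfl) le_rfl
      refine (h4 _ _ _ _).trans ?_
      simp only [norm_mul, Complex.norm_real, RingHomIsometric.norm_map, Real.norm_eq_abs,
        Nat.add_sub_cancel, hg1, hg2, hg3, hg4]
      have hkabs : ∀ j, |k j| = k j := fun j => abs_of_pos (hkpos j)
      simp only [hkabs]
      have ht4 : k m * ‖u (m - 1)‖ ≤ lam * (k (m - 1) * ‖u (m - 1)‖) := by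
        cases m with
        | zero => simp [hu0]
        | succ j => rw [hstep j]; simp [Nat.add_sub_cancel, mul_assoc]
      have hD : |b| * k m * ‖v m‖ * ‖u (m - 1)‖
          ≤ lam * |b| * (k (m - 1) * ‖u (m - 1)‖) * ‖v m‖ := by
        nlinarith [mul_le_mul_of_nonneg_right
          (mul_le_mul_of_nonneg_left ht4 (abs_nonneg b)) (norm_nonneg (v m))]
      have hB : |b| * k (m + 1) * ‖v (m + 1 + 1)‖ * ‖u m‖
          = lam * |b| * (k m * ‖u m‖) * ‖v (m + 1 + 1)‖ := by rw [hstep]; ring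
      refine add_le_add (add_le_add (add_le_add (le_of_eq (by ring)) (le_of_eq hB))
        (le_of_eq (by ring))) ?_
      exact hD
  -- domination and conclusion
  have hBsum : Summable (fun n => ‖shellB k a b u v n‖ ^ 2) := by
    refine Summable.of_nonneg_of_le (fun n => sq_nonneg _) (fun n => ?_) hs1234
    exact pow_le_pow_left₀ (norm_nonneg _) (hpt n) 2
  have hdom : Real.sqrt (∑' n, ‖shellB k a b u v n‖ ^ 2)
      ≤ Real.sqrt (∑' n, (g1 n + g2 n + g3 n + g4 n) ^ 2) := by
    apply Real.sqrt_le_sqrt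
    exact Summable.tsum_le_tsum (fun n => pow_le_pow_left₀ (norm_nonneg _) (hpt n) 2) hBsum hs1234
  have hSnn : 0 ≤ Real.sqrt S := Real.sqrt_nonneg _
  have hVnn : 0 ≤ Real.sqrt Vs := Real.sqrt_nonneg _
  calc Real.sqrt (∑' n, ‖shellB k a b u v n‖ ^ 2)
      ≤ Real.sqrt (∑' n, (g1 n + g2 n + g3 n + g4 n) ^ 2) := hdom
    _ ≤ Real.sqrt (∑' n, (g1 n + g2 n + g3 n) ^ 2) + Real.sqrt (∑' n, (g4 n) ^ 2) := hb1234
    _ ≤ (2 * |a| + 2 * lam * |b|) * Real.sqrt S * Real.sqrt Vs := by nlinarith [hb12, hb123, hb1, hb2, hb3, hb4]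
end

section
/- For the sabra shell bilinear map B with coefficients satisfying a + b + c = 0, the energy conservation identity Re(B(u,u), u) = 0 holds for all u ∈ V, where (·,·) is the l² inner product (u,v) = ∑ uₙ vₙ*. -/
/-- The sabra shell model nonlinearity `B(u,u)` written with the three
coefficients `a, b, c`, with the convention `u₀ = u₋₁ = 0`. -/
noncomputable def shellBdiag (k : ℕ → ℝ) (a b c : ℝ) (u : ℕ → ℂ) : ℕ → ℂ := fun n =>
  if n = 0 then 0 else
    (-Complex.I) * ((a : ℂ) * (k (n + 1) : ℂ) * u (n + 2) * (starRingEnd ℂ) (u (n + 1))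
      + (b : ℂ) * (k n : ℂ) * u (n + 1) * (starRingEnd ℂ) (u (n - 1))
      - (c : ℂ) * (k (n - 1) : ℂ) * u (n - 1) * u (n - 2))

lemma shell_key (K1 K2 K3 a b c : ℝ) (x y z w v : ℂ) :
    ((-Complex.I) * ((a:ℂ) * (K1:ℂ) * x * (starRingEnd ℂ) y
      + (b:ℂ) * (K2:ℂ) * y * (starRingEnd ℂ) w
      - (c:ℂ) * (K3:ℂ) * w * v) * (starRingEnd ℂ) z).re
    = a * ((K1:ℂ) * x * (starRingEnd ℂ) y * (starRingEnd ℂ) z).im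
      + b * ((K2:ℂ) * y * (starRingEnd ℂ) z * (starRingEnd ℂ) w).im
      + c * ((K3:ℂ) * z * (starRingEnd ℂ) w * (starRingEnd ℂ) v).im := by
  simp [Complex.mul_re, Complex.mul_im, Complex.conj_re, Complex.conj_im]
  ring

/-- auxiliary triple-product imaginary part -/
noncomputable def shellM (k : ℕ → ℝ) (u : ℕ → ℂ) (j : ℕ) : ℝ :=
  ((k j : ℂ) * u (j+1) * (starRingEnd ℂ) (u j) * (starRingEnd ℂ) (u (j-1))).im


set_option maxHeartbeats 1000000 in
/-- energy conservation `Re (B(u,u), u) = 0` when `a + b + c = 0`. -/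
theorem shellB_energy_conservation (k0 lam a b c : ℝ) (hk0 : 0 < k0) (hlam : 1 < lam)
    (habc : a + b + c = 0)
    (k : ℕ → ℝ) (hk : ∀ n, k n = k0 * lam ^ n)
    (u : ℕ → ℂ) (hu0 : u 0 = 0)
    (hu : Summable (fun n => (k n) ^ 2 * ‖u n‖ ^ 2))
    (hS : Summable (fun n => shellBdiag k a b c u n * (starRingEnd ℂ) (u n))) :
    (∑' n, shellBdiag k a b c u n * (starRingEnd ℂ) (u n)).re = 0 := by
  set m : ℕ → ℝ := shellM k u with hm_def
  have hm0 : m 0 = 0 := by simp [hm_def, shellM, hu0]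
  have hm1' : m 1 = 0 := by simp [hm_def, shellM, hu0]
  -- termwise identity
  have hterm : ∀ n, (shellBdiag k a b c u n * (starRingEnd ℂ) (u n)).re
      = a * m (n+1) + b * m n + c * m (n-1) := by
    intro n
    match n with
    | 0 => simp [shellBdiag, hm0, hm1']
    | Nat.succ j =>
      have h1 : j + 1 + 1 + 1 = j + 3 := by omega
      have h2 : j + 1 + 1 = j + 2 := by omega
      have h3 : j + 1 - 1 = j := by omega
      have h4 : j + 1 - 2 = j - 1 := by omega
      simp only [shellBdiag, if_neg (Nat.succ_ne_zero j), hm_def, shellM, h1, h2, h3, h4]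
      exact shell_key (k (j+2)) (k (j+1)) (k j) a b c
        (u (j+3)) (u (j+2)) (u (j+1)) (u j) (u (j-1))
  -- positivity of k
  have hkpos : ∀ n, 0 < k n := fun n => by
    rw [hk]; positivity
  -- summability of m
  have hT : ∀ n, (k n) * ‖u n‖ ≤ Real.sqrt (∑' n, (k n) ^ 2 * ‖u n‖ ^ 2) := by
    intro n
    have hle : (k n * ‖u n‖) ^ 2 ≤ ∑' n, (k n) ^ 2 * ‖u n‖ ^ 2 := by
      have := Summable.le_tsum hu n (fun i _ => by positivity)
      calc (k n * ‖u n‖) ^ 2 = (k n) ^ 2 * ‖u n‖ ^ 2 := by ring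
        _ ≤ _ := this
    have h0 : 0 ≤ k n * ‖u n‖ := mul_nonneg (hkpos n).le (norm_nonneg _)
    nlinarith [Real.sq_sqrt (le_trans (sq_nonneg (k n * ‖u n‖)) hle),
      Real.sqrt_nonneg (∑' n, (k n) ^ 2 * ‖u n‖ ^ 2)]
  set T := Real.sqrt (∑' n, (k n) ^ 2 * ‖u n‖ ^ 2) with hTdef
  have hTnn : 0 ≤ T := Real.sqrt_nonneg _
  have hu2 : Summable (fun n => ‖u n‖ ^ 2) := by
    apply Summable.of_nonneg_of_le (fun n => by positivity)
      (fun n => ?_) (hu.mul_left (1 / k0 ^ 2))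
    have hl : (1:ℝ) ≤ lam ^ n := one_le_pow₀ hlam.le
    have hk0le : k0 ≤ k n := by
      rw [hk]; nlinarith
    have hsq : k0 ^ 2 ≤ (k n) ^ 2 := by nlinarith
    have h2 : k0 ^ 2 * ‖u n‖ ^ 2 ≤ (k n) ^ 2 * ‖u n‖ ^ 2 :=
      mul_le_mul_of_nonneg_right hsq (sq_nonneg _)
    rw [div_mul_eq_mul_div, le_div_iff₀ (by positivity)]
    nlinarith
  have hu2s : Summable (fun n => ‖u (n+1)‖ ^ 2) := (summable_nat_add_iff 1).mpr hu2
  have hu2p : Summable (fun n => ‖u (n-1)‖ ^ 2) := by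
    apply (summable_nat_add_iff 1).mp
    simpa using hu2
  have hmabs : ∀ n, |m n| ≤ T * ((‖u (n+1)‖ ^ 2 + ‖u (n-1)‖ ^ 2) / 2) := by
    intro n
    have h1 : |m n| ≤ ‖(k n : ℂ) * u (n+1) * (starRingEnd ℂ) (u n) * (starRingEnd ℂ) (u (n-1))‖ :=
      Complex.abs_im_le_norm _
    have h2 : ‖(k n : ℂ) * u (n+1) * (starRingEnd ℂ) (u n) * (starRingEnd ℂ) (u (n-1))‖
        = (k n * ‖u n‖) * (‖u (n+1)‖ * ‖u (n-1)‖) := by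
      simp [norm_mul, abs_of_pos (hkpos n)]
      ring
    have h3 : ‖u (n+1)‖ * ‖u (n-1)‖ ≤ (‖u (n+1)‖ ^ 2 + ‖u (n-1)‖ ^ 2) / 2 := by
      nlinarith [sq_nonneg (‖u (n+1)‖ - ‖u (n-1)‖)]
    calc |m n| ≤ (k n * ‖u n‖) * (‖u (n+1)‖ * ‖u (n-1)‖) := by rw [← h2]; exact h1
      _ ≤ T * ((‖u (n+1)‖ ^ 2 + ‖u (n-1)‖ ^ 2) / 2) :=
          mul_le_mul (hT n) h3 (by positivity) hTnn
  have hm : Summable m := by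
    rw [← summable_abs_iff]
    apply Summable.of_nonneg_of_le (fun n => abs_nonneg _) hmabs
    exact ((hu2s.add hu2p).div_const 2).mul_left T
  have hm1 : Summable (fun n => m (n+1)) := (summable_nat_add_iff 1).mpr hm
  have hm2 : Summable (fun n => m (n-1)) := by
    apply (summable_nat_add_iff 1).mp
    simpa using hm
  have ht1 : ∑' n, m (n+1) = ∑' n, m n := by
    rw [Summable.tsum_eq_zero_add hm, hm0, zero_add]
  have ht2 : ∑' n, m (n-1) = ∑' n, m n := by
    rw [Summable.tsum_eq_zero_add hm2]
    simp [hm0]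
  rw [Complex.re_tsum hS, tsum_congr hterm]
  rw [Summable.tsum_add ((hm1.mul_left a).add (hm.mul_left b)) (hm2.mul_left c),
    Summable.tsum_add (hm1.mul_left a) (hm.mul_left b), tsum_mul_left, tsum_mul_left, tsum_mul_left,
    ht1, ht2]
  linear_combination (∑' (n : ℕ), m n) * habc
end

section
/- The trilinear form b(u,v,w) = ⟨B(u,v), w⟩ of the sabra shell model satisfies the antisymmetry b(u,v,w) = −b(u,w,v) for all u,v,w ∈ V (with appropriate conjugate-linear duality pairing), i.e., ⟨B(u,v),w⟩ = −⟨v, B(u,w)⟩. -/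
private lemma tsum_shift1 (F G : ℕ → ℂ) (hG : Summable G) (h0 : G 0 = 0)
    (h : ∀ n, G (n + 1) = F n) : ∑' n, G n = ∑' n, F n := by
  rw [Summable.tsum_eq_zero_add hG, h0, zero_add]
  exact tsum_congr h

private lemma tsum_shift2 (F G : ℕ → ℂ) (hG : Summable G) (h0 : G 0 = 0) (h1 : G 1 = 0)
    (h : ∀ n, G (n + 2) = F n) : ∑' n, G n = ∑' n, F n := by
  rw [Summable.tsum_eq_zero_add hG, h0, zero_add]
  have hG1 : Summable (fun n => G (n + 1)) := (summable_nat_add_iff 1).2 hG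
  rw [Summable.tsum_eq_zero_add hG1, h1, zero_add]
  exact tsum_congr fun n => h n

private lemma summable_of_sq_bound (C : ℝ) (hC : 0 ≤ C) (p q : ℕ → ℝ)
    (hp : Summable fun n => p n ^ 2) (hq : Summable fun n => q n ^ 2) (z : ℕ → ℂ)
    (hz : ∀ n, ‖z n‖ ≤ C * (p n * q n)) (hpn : ∀ n, 0 ≤ p n) (hqn : ∀ n, 0 ≤ q n) :
    Summable z := by
  refine Summable.of_norm_bounded (g := fun n => C * (p n ^ 2 + q n ^ 2)) ((hp.add hq).mul_left C) ?_
  intro n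
  refine (hz n).trans (mul_le_mul_of_nonneg_left ?_ hC)
  nlinarith [sq_nonneg (p n - q n), hpn n, hqn n]

private lemma mul_bound5 {A K nu p q C : ℝ} (hA : 0 ≤ A) (hp : 0 ≤ p) (hq : 0 ≤ q)
    (h : K * nu ≤ C) : A * K * nu * p * q ≤ A * C * (p * q) := by
  have h1 : A * (K * nu) ≤ A * C := mul_le_mul_of_nonneg_left h hA
  have h2 : (A * (K * nu)) * (p * q) ≤ (A * C) * (p * q) :=
    mul_le_mul_of_nonneg_right h1 (mul_nonneg hp hq)
  calc A * K * nu * p * q = (A * (K * nu)) * (p * q) := by ring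
  _ ≤ (A * C) * (p * q) := h2
  _ = A * C * (p * q) := by ring

private lemma l2_facts (k0 lam : ℝ) (hk0 : 0 < k0) (hlam : 1 < lam) (k : ℕ → ℝ)
    (hk : ∀ n, k n = k0 * lam ^ n) (x : ℕ → ℂ)
    (hx : Summable fun n => (k n) ^ 2 * ‖x n‖ ^ 2) :
    (Summable fun n => ‖x n‖ ^ 2) ∧ ∃ C, 0 ≤ C ∧ ∀ n, k n * ‖x n‖ ≤ C := by
  have hkpos : ∀ n, k0 ≤ k n := by
    intro n
    have h1 : (1:ℝ) ≤ lam ^ n := one_le_pow₀ hlam.le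
    calc k0 = k0 * 1 := (mul_one k0).symm
    _ ≤ k0 * lam ^ n := mul_le_mul_of_nonneg_left h1 hk0.le
    _ = k n := (hk n).symm
  have hknn : ∀ n, 0 ≤ k n := fun n => le_trans hk0.le (hkpos n)
  constructor
  · have hle : ∀ n, ‖x n‖ ^ 2 ≤ (1 / k0 ^ 2) * ((k n) ^ 2 * ‖x n‖ ^ 2) := by
      intro n
      have h1 : k0 ^ 2 ≤ (k n) ^ 2 := pow_le_pow_left₀ hk0.le (hkpos n) 2
      have h2 : k0 ^ 2 * ‖x n‖ ^ 2 ≤ (k n) ^ 2 * ‖x n‖ ^ 2 :=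
        mul_le_mul_of_nonneg_right h1 (by positivity)
      calc ‖x n‖ ^ 2 = (1 / k0 ^ 2) * (k0 ^ 2 * ‖x n‖ ^ 2) := by field_simp
      _ ≤ (1 / k0 ^ 2) * ((k n) ^ 2 * ‖x n‖ ^ 2) :=
        mul_le_mul_of_nonneg_left h2 (by positivity)
    exact Summable.of_nonneg_of_le (fun n => sq_nonneg _) hle (hx.mul_left _)
  · refine ⟨Real.sqrt (∑' n, (k n) ^ 2 * ‖x n‖ ^ 2), Real.sqrt_nonneg _, fun n => ?_⟩
    have h1 : (k n * ‖x n‖) ^ 2 ≤ ∑' n, (k n) ^ 2 * ‖x n‖ ^ 2 := by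
      have h2 := Summable.le_tsum hx n fun j _ => by positivity
      calc (k n * ‖x n‖) ^ 2 = (k n) ^ 2 * ‖x n‖ ^ 2 := by ring
      _ ≤ _ := h2
    calc k n * ‖x n‖ = Real.sqrt ((k n * ‖x n‖) ^ 2) := by
          rw [Real.sqrt_sq (mul_nonneg (hknn n) (norm_nonneg _))]
    _ ≤ _ := Real.sqrt_le_sqrt h1

set_option maxHeartbeats 1600000 in
/-- antisymmetry of the trilinear form,
`⟨B(u,v), w⟩ = −⟨v, B(u,w)⟩`, i.e. `b(u,v,w) = −b(u,w,v)`. -/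
theorem shellB_trilinear_antisym (k0 lam a b : ℝ) (hk0 : 0 < k0) (hlam : 1 < lam)
    (k : ℕ → ℝ) (hk : ∀ n, k n = k0 * lam ^ n)
    (u v w : ℕ → ℂ) (hu0 : u 0 = 0) (hv0 : v 0 = 0) (hw0 : w 0 = 0)
    (hu : Summable (fun n => (k n) ^ 2 * ‖u n‖ ^ 2))
    (hv : Summable (fun n => (k n) ^ 2 * ‖v n‖ ^ 2))
    (hw : Summable (fun n => (k n) ^ 2 * ‖w n‖ ^ 2))
    (hS1 : Summable (fun n => shellB k a b u v n * (starRingEnd ℂ) (w n)))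
    (hS2 : Summable (fun n => v n * (starRingEnd ℂ) (shellB k a b u w n))) :
    ∑' n, shellB k a b u v n * (starRingEnd ℂ) (w n)
      = -∑' n, v n * (starRingEnd ℂ) (shellB k a b u w n) := by
  have hlam0 : (0:ℝ) < lam := lt_trans one_pos hlam
  have hknn : ∀ n, 0 ≤ k n := by
    intro n; rw [hk]; positivity
  have hk_succ : ∀ n, k (n + 1) = lam * k n := by
    intro n; rw [hk, hk, pow_succ]; ring
  obtain ⟨hu2, Cu, hCu0, hCu⟩ := l2_facts k0 lam hk0 hlam k hk u hu
  obtain ⟨hv2, -⟩ := l2_facts k0 lam hk0 hlam k hk v hv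
  obtain ⟨hw2, -⟩ := l2_facts k0 lam hk0 hlam k hk w hw
  -- auxiliary bounds for shifted `u`-entries
  have hCu' : ∀ n, k n * ‖u (n - 1)‖ ≤ lam * Cu := by
    intro n
    cases n with
    | zero => simp [hu0]; positivity
    | succ m =>
      have : k (m + 1) * ‖u m‖ = lam * (k m * ‖u m‖) := by rw [hk_succ]; ring
      rw [show (m + 1) - 1 = m from rfl, this]
      exact mul_le_mul_of_nonneg_left (hCu m) hlam0.le
  have hCu'' : ∀ n, k (n - 1) * ‖u (n - 1)‖ ≤ Cu := by
    intro n
    cases n with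
    | zero => simpa [hu0] using hCu0
    | succ m => exact hCu m
  have hCu''' : ∀ n, k (n - 1) * ‖u (n - 2)‖ ≤ lam * Cu := by
    intro n
    cases n with
    | zero => simp [hu0]; positivity
    | succ m => exact hCu' m
  -- shifted square-summability
  have hv2p1 : Summable fun n => ‖v (n + 1)‖ ^ 2 := (summable_nat_add_iff 1).2 hv2
  have hv2p2 : Summable fun n => ‖v (n + 2)‖ ^ 2 := (summable_nat_add_iff 2).2 hv2
  have hv2m1 : Summable fun n => ‖v (n - 1)‖ ^ 2 :=
    (summable_nat_add_iff (f := fun n => ‖v (n - 1)‖ ^ 2) 1).1 hv2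
  have hv2m2 : Summable fun n => ‖v (n - 2)‖ ^ 2 :=
    (summable_nat_add_iff (f := fun n => ‖v (n - 2)‖ ^ 2) 2).1 hv2
  have hw2p1 : Summable fun n => ‖w (n + 1)‖ ^ 2 := (summable_nat_add_iff 1).2 hw2
  have hw2p2 : Summable fun n => ‖w (n + 2)‖ ^ 2 := (summable_nat_add_iff 2).2 hw2
  have hw2m1 : Summable fun n => ‖w (n - 1)‖ ^ 2 :=
    (summable_nat_add_iff (f := fun n => ‖w (n - 1)‖ ^ 2) 1).1 hw2
  have hw2m2 : Summable fun n => ‖w (n - 2)‖ ^ 2 :=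
    (summable_nat_add_iff (f := fun n => ‖w (n - 2)‖ ^ 2) 2).1 hw2
  -- the eight component sequences
  set F1 : ℕ → ℂ := fun n => (a:ℂ) * (k (n+1):ℂ) * (starRingEnd ℂ) (u (n+1)) * v (n+2)
      * (starRingEnd ℂ) (w n) with hF1
  set F2 : ℕ → ℂ := fun n => (b:ℂ) * (k n:ℂ) * (starRingEnd ℂ) (u (n-1)) * v (n+1)
      * (starRingEnd ℂ) (w n) with hF2
  set F3 : ℕ → ℂ := fun n => (a:ℂ) * (k (n-1):ℂ) * u (n-1) * v (n-2)
      * (starRingEnd ℂ) (w n) with hF3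
  set F4 : ℕ → ℂ := fun n => (b:ℂ) * (k (n-1):ℂ) * u (n-2) * v (n-1)
      * (starRingEnd ℂ) (w n) with hF4
  set G1 : ℕ → ℂ := fun n => (a:ℂ) * (k (n+1):ℂ) * u (n+1) * (starRingEnd ℂ) (w (n+2))
      * v n with hG1
  set G2 : ℕ → ℂ := fun n => (b:ℂ) * (k n:ℂ) * u (n-1) * (starRingEnd ℂ) (w (n+1))
      * v n with hG2
  set G3 : ℕ → ℂ := fun n => (a:ℂ) * (k (n-1):ℂ) * (starRingEnd ℂ) (u (n-1))
      * (starRingEnd ℂ) (w (n-2)) * v n with hG3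
  set G4 : ℕ → ℂ := fun n => (b:ℂ) * (k (n-1):ℂ) * (starRingEnd ℂ) (u (n-2))
      * (starRingEnd ℂ) (w (n-1)) * v n with hG4
  -- summability of each component
  have sF1 : Summable F1 := by
    refine summable_of_sq_bound (|a| * Cu) (by positivity) (fun n => ‖v (n+2)‖)
      (fun n => ‖w n‖) hv2p2 hw2 F1 (fun n => ?_) (fun n => norm_nonneg _) (fun n => norm_nonneg _)
    simp only [hF1, norm_mul, Complex.norm_real, RCLike.norm_conj, Real.norm_eq_abs]
    rw [abs_of_nonneg (hknn (n+1))]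
    exact mul_bound5 (abs_nonneg a) (norm_nonneg _) (norm_nonneg _) (hCu (n+1))
  have sF2 : Summable F2 := by
    refine summable_of_sq_bound (|b| * (lam * Cu)) (by positivity) (fun n => ‖v (n+1)‖)
      (fun n => ‖w n‖) hv2p1 hw2 F2 (fun n => ?_) (fun n => norm_nonneg _) (fun n => norm_nonneg _)
    simp only [hF2, norm_mul, Complex.norm_real, RCLike.norm_conj, Real.norm_eq_abs]
    rw [abs_of_nonneg (hknn n)]
    exact mul_bound5 (abs_nonneg b) (norm_nonneg _) (norm_nonneg _) (hCu' n)
  have sF3 : Summable F3 := by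
    refine summable_of_sq_bound (|a| * Cu) (by positivity) (fun n => ‖v (n-2)‖)
      (fun n => ‖w n‖) hv2m2 hw2 F3 (fun n => ?_) (fun n => norm_nonneg _) (fun n => norm_nonneg _)
    simp only [hF3, norm_mul, Complex.norm_real, RCLike.norm_conj, Real.norm_eq_abs]
    rw [abs_of_nonneg (hknn (n-1))]
    exact mul_bound5 (abs_nonneg a) (norm_nonneg _) (norm_nonneg _) (hCu'' n)
  have sF4 : Summable F4 := by
    refine summable_of_sq_bound (|b| * (lam * Cu)) (by positivity) (fun n => ‖v (n-1)‖)
      (fun n => ‖w n‖) hv2m1 hw2 F4 (fun n => ?_) (fun n => norm_nonneg _) (fun n => norm_nonneg _)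
    simp only [hF4, norm_mul, Complex.norm_real, RCLike.norm_conj, Real.norm_eq_abs]
    rw [abs_of_nonneg (hknn (n-1))]
    exact mul_bound5 (abs_nonneg b) (norm_nonneg _) (norm_nonneg _) (hCu''' n)
  have sG1 : Summable G1 := by
    refine summable_of_sq_bound (|a| * Cu) (by positivity) (fun n => ‖w (n+2)‖)
      (fun n => ‖v n‖) hw2p2 hv2 G1 (fun n => ?_) (fun n => norm_nonneg _) (fun n => norm_nonneg _)
    simp only [hG1, norm_mul, Complex.norm_real, RCLike.norm_conj, Real.norm_eq_abs]
    rw [abs_of_nonneg (hknn (n+1))]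
    exact mul_bound5 (abs_nonneg a) (norm_nonneg _) (norm_nonneg _) (hCu (n+1))
  have sG2 : Summable G2 := by
    refine summable_of_sq_bound (|b| * (lam * Cu)) (by positivity) (fun n => ‖w (n+1)‖)
      (fun n => ‖v n‖) hw2p1 hv2 G2 (fun n => ?_) (fun n => norm_nonneg _) (fun n => norm_nonneg _)
    simp only [hG2, norm_mul, Complex.norm_real, RCLike.norm_conj, Real.norm_eq_abs]
    rw [abs_of_nonneg (hknn n)]
    exact mul_bound5 (abs_nonneg b) (norm_nonneg _) (norm_nonneg _) (hCu' n)
  have sG3 : Summable G3 := by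
    refine summable_of_sq_bound (|a| * Cu) (by positivity) (fun n => ‖w (n-2)‖)
      (fun n => ‖v n‖) hw2m2 hv2 G3 (fun n => ?_) (fun n => norm_nonneg _) (fun n => norm_nonneg _)
    simp only [hG3, norm_mul, Complex.norm_real, RCLike.norm_conj, Real.norm_eq_abs]
    rw [abs_of_nonneg (hknn (n-1))]
    exact mul_bound5 (abs_nonneg a) (norm_nonneg _) (norm_nonneg _) (hCu'' n)
  have sG4 : Summable G4 := by
    refine summable_of_sq_bound (|b| * (lam * Cu)) (by positivity) (fun n => ‖w (n-1)‖)
      (fun n => ‖v n‖) hw2m1 hv2 G4 (fun n => ?_) (fun n => norm_nonneg _) (fun n => norm_nonneg _)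
    simp only [hG4, norm_mul, Complex.norm_real, RCLike.norm_conj, Real.norm_eq_abs]
    rw [abs_of_nonneg (hknn (n-1))]
    exact mul_bound5 (abs_nonneg b) (norm_nonneg _) (norm_nonneg _) (hCu''' n)
  -- pointwise identities
  have hid1 : ∀ n, shellB k a b u v n * (starRingEnd ℂ) (w n)
      = (-Complex.I) * (F1 n + F2 n + F3 n + F4 n) := by
    intro n
    by_cases hn : n = 0
    · subst hn
      simp [shellB, hw0, hF1, hF2, hF3, hF4]
    · simp only [shellB, if_neg hn, hF1, hF2, hF3, hF4]
      ring
  have hid2 : ∀ n, v n * (starRingEnd ℂ) (shellB k a b u w n)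
      = Complex.I * (G1 n + G2 n + G3 n + G4 n) := by
    intro n
    by_cases hn : n = 0
    · subst hn
      simp [shellB, hv0, hG1, hG2, hG3, hG4]
    · simp only [shellB, if_neg hn, hG1, hG2, hG3, hG4, map_add, map_mul, map_neg,
        Complex.conj_I, Complex.conj_ofReal, Complex.conj_conj]
      ring
  -- the four shift identities
  have eq1 : ∑' n, G3 n = ∑' n, F1 n := by
    refine tsum_shift2 F1 G3 sG3 ?_ ?_ ?_
    · simp [hG3, hv0]
    · simp [hG3, hw0]
    · intro n
      simp only [hG3, hF1, show (n+2) - 1 = n + 1 from rfl, show (n+2) - 2 = n from rfl]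
      ring
  have eq2 : ∑' n, G4 n = ∑' n, F2 n := by
    refine tsum_shift1 F2 G4 sG4 ?_ ?_
    · simp [hG4, hv0]
    · intro n
      simp only [hG4, hF2, show (n+1) - 1 = n from rfl, show (n+1) - 2 = n - 1 from rfl]
      ring
  have eq3 : ∑' n, F3 n = ∑' n, G1 n := by
    refine tsum_shift2 G1 F3 sF3 ?_ ?_ ?_
    · simp [hF3, hw0]
    · simp [hF3, hu0]
    · intro n
      simp only [hF3, hG1, show (n+2) - 1 = n + 1 from rfl, show (n+2) - 2 = n from rfl]
      ring
  have eq4 : ∑' n, F4 n = ∑' n, G2 n := by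
    refine tsum_shift1 G2 F4 sF4 ?_ ?_
    · simp [hF4, hw0]
    · intro n
      simp only [hF4, hG2, show (n+1) - 1 = n from rfl, show (n+1) - 2 = n - 1 from rfl]
      ring
  -- assemble
  have key1 : ∑' n, shellB k a b u v n * (starRingEnd ℂ) (w n)
      = (-Complex.I) * ((∑' n, F1 n) + (∑' n, F2 n) + (∑' n, F3 n) + (∑' n, F4 n)) := by
    rw [tsum_congr hid1, tsum_mul_left]
    congr 1
    rw [Summable.tsum_add ((sF1.add sF2).add sF3) sF4, Summable.tsum_add (sF1.add sF2) sF3, Summable.tsum_add sF1 sF2]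
  have key2 : ∑' n, v n * (starRingEnd ℂ) (shellB k a b u w n)
      = Complex.I * ((∑' n, G1 n) + (∑' n, G2 n) + (∑' n, G3 n) + (∑' n, G4 n)) := by
    rw [tsum_congr hid2, tsum_mul_left]
    congr 1
    rw [Summable.tsum_add ((sG1.add sG2).add sG3) sG4, Summable.tsum_add (sG1.add sG2) sG3, Summable.tsum_add sG1 sG2]
  rw [key1, key2, ← eq1, ← eq2, eq3, eq4]
  ring
end

section
/- Characterization of the projection onto the helicity ball: for u ∈ D(A^{1/2}) with |A^{1/4}u| > ρ, the projection z = P_K(u) onto K = {y : ∑ kₙ|yₙ|² ≤ ρ²} satisfies the Lagrange-multiplier equation z + 4λ |A^{1/4}z| A^{1/2}z = u for some λ ≥ 0 (equivalently componentwise zₙ(1 + μkₙ) = uₙ for some μ ≥ 0 with ∑ kₙ|zₙ|² = ρ²). -/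
/-- Membership in the helicity ball `K = {y ∈ D(A^{1/4}) : ∑ₙ kₙ|yₙ|² ≤ ρ²}`. -/
def inHelicityBall (k : ℕ → ℝ) (ρ : ℝ) (y : ℕ → ℂ) : Prop :=
  Summable (fun n => k n * ‖y n‖ ^ 2) ∧ ∑' n, k n * ‖y n‖ ^ 2 ≤ ρ ^ 2

lemma hb_key_ineq (t : ℝ) (ht : 0 ≤ t) (w y : ℂ) :
    ‖((1+t:ℝ):ℂ)*w - w‖^2 + t*‖w‖^2 ≤ ‖((1+t:ℝ):ℂ)*w - y‖^2 + t*‖y‖^2 := by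
  simp only [Complex.sq_norm, Complex.normSq_apply, Complex.sub_re,
    Complex.sub_im, Complex.mul_re, Complex.mul_im, Complex.ofReal_re, Complex.ofReal_im]
  nlinarith [sq_nonneg (w.re - y.re), sq_nonneg (w.im - y.im),
    mul_nonneg ht (sq_nonneg (w.re - y.re)), mul_nonneg ht (sq_nonneg (w.im - y.im))]

lemma hb_para (a b c : ℂ) :
    4*‖c - ((1/2:ℝ):ℂ)*(a+b)‖^2 + ‖a-b‖^2 = 2*‖c-a‖^2 + 2*‖c-b‖^2 := by
  simp only [Complex.sq_norm, Complex.normSq_apply, Complex.sub_re,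
    Complex.sub_im, Complex.mul_re, Complex.mul_im, Complex.ofReal_re, Complex.ofReal_im,
    Complex.add_re, Complex.add_im]
  ring

lemma hb_mid (a b : ℂ) : ‖((1/2:ℝ):ℂ)*(a+b)‖^2 ≤ (‖a‖^2 + ‖b‖^2)/2 := by
  simp only [Complex.sq_norm, Complex.normSq_apply, Complex.sub_re,
    Complex.sub_im, Complex.mul_re, Complex.mul_im, Complex.ofReal_re, Complex.ofReal_im,
    Complex.add_re, Complex.add_im]
  nlinarith [sq_nonneg (a.re - b.re), sq_nonneg (a.im - b.im)]

lemma hb_sub_sq (a b : ℂ) : ‖a - b‖^2 ≤ 2*‖a‖^2 + 2*‖b‖^2 := by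
  have h := norm_sub_le a b
  nlinarith [norm_nonneg a, norm_nonneg b, norm_nonneg (a-b), sq_nonneg (‖a‖-‖b‖)]

set_option maxHeartbeats 1000000 in
/-- characterization of the metric projection onto the helicity
ball: for `u ∈ D(A^{1/2})` with `|A^{1/4}u|² > ρ²`, the projection `z = P_K(u)`
satisfies the Lagrange-multiplier equation `z + 4λ|A^{1/4}z| A^{1/2}z = u` for
some `λ ≥ 0` (equivalently, componentwise `zₙ(1 + μkₙ) = uₙ` for some `μ ≥ 0`),
with the constraint active: `∑ₙ kₙ|zₙ|² = ρ²`. -/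
theorem helicity_ball_projection_lagrange (k0 lam0 ρ : ℝ)
    (hk0 : 0 < k0) (hlam0 : 1 < lam0) (hρ : 0 < ρ)
    (k : ℕ → ℝ) (hk : ∀ n, k n = k0 * lam0 ^ n)
    (u : ℕ → ℂ) (hu : Summable (fun n => (k n) ^ 2 * ‖u n‖ ^ 2))
    (huout : ρ ^ 2 < ∑' n, k n * ‖u n‖ ^ 2)
    (huA14 : Summable (fun n => k n * ‖u n‖ ^ 2))
    (z : ℕ → ℂ) (hzK : inHelicityBall k ρ z)
    (hzproj : ∀ y : ℕ → ℂ, inHelicityBall k ρ y →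
      ∑' n, ‖u n - z n‖ ^ 2 ≤ ∑' n, ‖u n - y n‖ ^ 2) :
    (∃ l : ℝ, 0 ≤ l ∧ ∀ n,
        z n + (4 * l * Real.sqrt (∑' m, k m * ‖z m‖ ^ 2) * k n : ℝ) • z n = u n)
      ∧ (∃ μ : ℝ, 0 ≤ μ ∧ ∀ n, ((1 + μ * k n : ℝ) : ℂ) * z n = u n)
      ∧ ∑' n, k n * ‖z n‖ ^ 2 = ρ ^ 2 := by
  have hkpos : ∀ n, 0 < k n := by
    intro n; rw [hk]; positivity
  have hkk0 : ∀ n, k0 ≤ k n := by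
    intro n; rw [hk]
    have h1 : (1:ℝ) ≤ lam0 ^ n := one_le_pow₀ hlam0.le
    nlinarith
  -- from weighted summability to plain l² summability
  have hl2 : ∀ x : ℕ → ℂ, Summable (fun n => k n * ‖x n‖ ^ 2) →
      Summable (fun n => ‖x n‖ ^ 2) := by
    intro x hx
    apply (hx.mul_left k0⁻¹).of_nonneg_of_le (fun n => sq_nonneg _)
    intro n
    have h := mul_le_mul_of_nonneg_right (hkk0 n) (sq_nonneg ‖x n‖)
    calc ‖x n‖ ^ 2 = k0⁻¹ * (k0 * ‖x n‖ ^ 2) := by field_simp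
      _ ≤ k0⁻¹ * (k n * ‖x n‖ ^ 2) :=
          mul_le_mul_of_nonneg_left h (inv_nonneg.mpr hk0.le)
  have hu2 : Summable (fun n => ‖u n‖ ^ 2) := hl2 u huA14
  have hz2 : Summable (fun n => ‖z n‖ ^ 2) := hl2 z hzK.1
  have hsubsum : ∀ x y : ℕ → ℂ, Summable (fun n => ‖x n‖ ^ 2) →
      Summable (fun n => ‖y n‖ ^ 2) → Summable (fun n => ‖x n - y n‖ ^ 2) := by
    intro x y hx hy
    apply ((hx.mul_left 2).add (hy.mul_left 2)).of_nonneg_of_le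
      (fun n => sq_nonneg _) (fun n => hb_sub_sq (x n) (y n))
  ---- IVT part : find the multiplier μ
  set S := ∑' n, k n * ‖u n‖ ^ 2 with hSdef
  have hS : ρ^2 < S := huout
  have hSpos : 0 < S := lt_trans (by positivity) hS
  set g : ℕ → ℝ → ℝ := fun n t => k n * ‖u n‖^2 / (1 + max t 0 * k n)^2 with hg
  have hden : ∀ n t, (1:ℝ) ≤ 1 + max t 0 * k n := fun n t => by
    nlinarith [mul_nonneg (le_max_right t 0) (hkpos n).le]
  have hdensq : ∀ n t, (1:ℝ) ≤ (1 + max t 0 * k n)^2 := fun n t => by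
    nlinarith [hden n t]
  have hdpos : ∀ n t, (0:ℝ) < (1 + max t 0 * k n)^2 := fun n t => by
    nlinarith [hdensq n t]
  have hgnn : ∀ n t, 0 ≤ g n t := fun n t =>
    div_nonneg (mul_nonneg (hkpos n).le (sq_nonneg _)) (hdpos n t).le
  have hgbd : ∀ n t, ‖g n t‖ ≤ k n * ‖u n‖^2 := by
    intro n t
    rw [Real.norm_eq_abs, abs_of_nonneg (hgnn n t)]
    rw [div_le_iff₀ (hdpos n t)]
    nlinarith [hdensq n t, mul_nonneg (hkpos n).le (sq_nonneg ‖u n‖)]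
  have hgcont : ∀ n, Continuous (g n) := by
    intro n
    apply Continuous.div continuous_const
    · exact (continuous_const.add ((continuous_id.max continuous_const).mul
        continuous_const)).pow 2
    · intro t; exact ne_of_gt (hdpos n t)
  have hFcont : Continuous (fun t => ∑' n, g n t) :=
    continuous_tsum hgcont huA14 hgbd
  have hgsummable : ∀ t, Summable (fun n => g n t) := fun t =>
    huA14.of_nonneg_of_le (fun n => hgnn n t)
      (fun n => (le_abs_self _).trans (by simpa using hgbd n t))
  have hF0 : (∑' n, g n 0) = S := by
    apply tsum_congr; intro n; simp [hg]
  set M := S / (ρ^2 * k0) with hM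
  have hMpos : 0 < M := by positivity
  have hFM : (∑' n, g n M) ≤ ρ^2 := by
    have hterm : ∀ n, g n M ≤ (ρ^2 / S) * (k n * ‖u n‖^2) := by
      intro n
      have hmax : max M 0 = M := max_eq_left hMpos.le
      have hden' : (1:ℝ) ≤ 1 + M * k n := by
        have := hden n M; rwa [hmax] at this
      have h1 : S / ρ^2 ≤ 1 + M * k n := by
        have : M * k0 ≤ M * k n := mul_le_mul_of_nonneg_left (hkk0 n) hMpos.le
        have hMk0 : M * k0 = S / ρ^2 := by rw [hM]; field_simp
        nlinarith
      have h2 : S / ρ^2 ≤ (1 + M * k n)^2 := by nlinarith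
      rw [hg]; simp only [hmax]
      rw [div_le_iff₀ (by nlinarith)]
      calc k n * ‖u n‖^2 = (ρ^2/S) * (k n * ‖u n‖^2) * (S/ρ^2) := by
            field_simp
        _ ≤ ρ^2 / S * (k n * ‖u n‖ ^ 2) * (1 + M * k n) ^ 2 := by
            apply mul_le_mul_of_nonneg_left h2
              (mul_nonneg (by positivity) (mul_nonneg (hkpos n).le (sq_nonneg _)))
    calc (∑' n, g n M) ≤ ∑' n, (ρ^2/S) * (k n * ‖u n‖^2) :=
          Summable.tsum_le_tsum hterm (hgsummable M) (huA14.mul_left _)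
      _ = (ρ^2/S) * S := by rw [tsum_mul_left]
      _ = ρ^2 := by field_simp
  have hIVT := intermediate_value_Icc' (le_of_lt hMpos) (hFcont.continuousOn)
  have hmem : ρ^2 ∈ Set.Icc ((fun t => ∑' n, g n t) M) ((fun t => ∑' n, g n t) 0) := by
    constructor
    · exact hFM
    · simp only [hF0]; exact hS.le
  obtain ⟨μ, hμmem, hμeq⟩ := hIVT hmem
  have hμ : 0 ≤ μ := hμmem.1
  ---- the explicit projection w
  set w : ℕ → ℂ := fun n => (((1 + μ * k n)⁻¹ : ℝ) : ℂ) * u n with hw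
  have hd : ∀ n, (0:ℝ) < 1 + μ * k n := fun n => by
    nlinarith [mul_nonneg hμ (hkpos n).le]
  have huw : ∀ n, u n = ((1 + μ * k n : ℝ) : ℂ) * w n := by
    intro n
    rw [hw]
    rw [← mul_assoc, ← Complex.ofReal_mul, mul_inv_cancel₀ (ne_of_gt (hd n)),
      Complex.ofReal_one, one_mul]
  have hwnorm : ∀ n, k n * ‖w n‖ ^ 2 = g n μ := by
    intro n
    rw [hw, hg]
    simp only [max_eq_left hμ]
    rw [norm_mul, Complex.norm_real, Real.norm_eq_abs, abs_of_pos (inv_pos.mpr (hd n))]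
    rw [mul_pow]
    rw [← one_div, div_pow, one_pow]
    field_simp
  have hwsum : Summable (fun n => k n * ‖w n‖ ^ 2) := by
    simpa only [hwnorm] using hgsummable μ
  have hwρ : ∑' n, k n * ‖w n‖ ^ 2 = ρ ^ 2 := by
    rw [tsum_congr hwnorm]; exact hμeq
  have hw2 : Summable (fun n => ‖w n‖ ^ 2) := hl2 w hwsum
  have hwK : inHelicityBall k ρ w := ⟨hwsum, hwρ.le⟩
  ---- minimality of w
  have hwmin : ∀ y : ℕ → ℂ, inHelicityBall k ρ y →
      ∑' n, ‖u n - w n‖ ^ 2 ≤ ∑' n, ‖u n - y n‖ ^ 2 := by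
    intro y hy
    have hy2 : Summable (fun n => ‖y n‖ ^ 2) := hl2 y hy.1
    have hAuw : Summable (fun n => ‖u n - w n‖ ^ 2) := hsubsum u w hu2 hw2
    have hAuy : Summable (fun n => ‖u n - y n‖ ^ 2) := hsubsum u y hu2 hy2
    have key : ∀ n, ‖u n - w n‖ ^ 2 + μ * (k n * ‖w n‖ ^ 2)
        ≤ ‖u n - y n‖ ^ 2 + μ * (k n * ‖y n‖ ^ 2) := by
      intro n
      have h := hb_key_ineq (μ * k n) (mul_nonneg hμ (hkpos n).le) (w n) (y n)
      rw [← huw n] at h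
      calc ‖u n - w n‖ ^ 2 + μ * (k n * ‖w n‖ ^ 2)
          = ‖u n - w n‖ ^ 2 + μ * k n * ‖w n‖ ^ 2 := by ring
        _ ≤ ‖u n - y n‖ ^ 2 + μ * k n * ‖y n‖ ^ 2 := h
        _ = ‖u n - y n‖ ^ 2 + μ * (k n * ‖y n‖ ^ 2) := by ring
    have h1 := Summable.tsum_le_tsum key (hAuw.add (hwsum.mul_left μ)) (hAuy.add (hy.1.mul_left μ))
    rw [Summable.tsum_add hAuw (hwsum.mul_left μ), Summable.tsum_add hAuy (hy.1.mul_left μ),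
      tsum_mul_left, tsum_mul_left, hwρ] at h1
    have h2 : μ * ∑' n, k n * ‖y n‖ ^ 2 ≤ μ * ρ ^ 2 :=
      mul_le_mul_of_nonneg_left hy.2 hμ
    linarith
  ---- z = w
  have hd1 := hzproj w hwK
  have hd2 := hwmin z hzK
  have heq : ∑' n, ‖u n - w n‖ ^ 2 = ∑' n, ‖u n - z n‖ ^ 2 := le_antisymm hd2 hd1
  set m : ℕ → ℂ := fun n => ((1/2 : ℝ) : ℂ) * (z n + w n) with hm
  have hmsum : Summable (fun n => k n * ‖m n‖ ^ 2) := by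
    apply ((hzK.1.add hwsum).mul_left (1/2)).of_nonneg_of_le
      (fun n => mul_nonneg (hkpos n).le (sq_nonneg _))
    intro n
    have := hb_mid (z n) (w n)
    have h1 : k n * ‖m n‖ ^ 2 ≤ k n * ((‖z n‖^2 + ‖w n‖^2)/2) :=
      mul_le_mul_of_nonneg_left this (hkpos n).le
    calc k n * ‖m n‖ ^ 2 ≤ k n * ((‖z n‖^2 + ‖w n‖^2)/2) := h1
      _ = 1/2 * (k n * ‖z n‖^2 + k n * ‖w n‖^2) := by ring
  have hmK : inHelicityBall k ρ m := by
    refine ⟨hmsum, ?_⟩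
    have hterm : ∀ n, k n * ‖m n‖ ^ 2 ≤ 1/2 * (k n * ‖z n‖^2 + k n * ‖w n‖^2) := by
      intro n
      have := hb_mid (z n) (w n)
      have h1 : k n * ‖m n‖ ^ 2 ≤ k n * ((‖z n‖^2 + ‖w n‖^2)/2) :=
        mul_le_mul_of_nonneg_left this (hkpos n).le
      calc k n * ‖m n‖ ^ 2 ≤ k n * ((‖z n‖^2 + ‖w n‖^2)/2) := h1
        _ = 1/2 * (k n * ‖z n‖^2 + k n * ‖w n‖^2) := by ring
    calc ∑' n, k n * ‖m n‖ ^ 2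
        ≤ ∑' n, 1/2 * (k n * ‖z n‖^2 + k n * ‖w n‖^2) :=
          Summable.tsum_le_tsum hterm hmsum ((hzK.1.add hwsum).mul_left (1/2))
      _ = 1/2 * ((∑' n, k n * ‖z n‖^2) + ∑' n, k n * ‖w n‖^2) := by
          rw [tsum_mul_left, Summable.tsum_add hzK.1 hwsum]
      _ ≤ ρ ^ 2 := by
          rw [hwρ]; nlinarith [hzK.2]
  have hm2 : Summable (fun n => ‖m n‖ ^ 2) := hl2 m hmsum
  have hAum : Summable (fun n => ‖u n - m n‖ ^ 2) := hsubsum u m hu2 hm2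
  have hAzw : Summable (fun n => ‖z n - w n‖ ^ 2) := hsubsum z w hz2 hw2
  have hAuz : Summable (fun n => ‖u n - z n‖ ^ 2) := hsubsum u z hu2 hz2
  have hAuw : Summable (fun n => ‖u n - w n‖ ^ 2) := hsubsum u w hu2 hw2
  have hpara : ∀ n, 4 * ‖u n - m n‖ ^ 2 + ‖z n - w n‖ ^ 2
      = 2 * ‖u n - z n‖ ^ 2 + 2 * ‖u n - w n‖ ^ 2 := fun n =>
    hb_para (z n) (w n) (u n)
  have hsum_eq : 4 * (∑' n, ‖u n - m n‖ ^ 2) + (∑' n, ‖z n - w n‖ ^ 2)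
      = 4 * ∑' n, ‖u n - z n‖ ^ 2 := by
    have h1 : ∑' n, (4 * ‖u n - m n‖ ^ 2 + ‖z n - w n‖ ^ 2)
        = ∑' n, (2 * ‖u n - z n‖ ^ 2 + 2 * ‖u n - w n‖ ^ 2) := tsum_congr hpara
    rw [Summable.tsum_add (hAum.mul_left 4) hAzw, Summable.tsum_add (hAuz.mul_left 2) (hAuw.mul_left 2),
      tsum_mul_left, tsum_mul_left, tsum_mul_left, heq] at h1
    linarith
  have hmz := hzproj m hmK
  have hzw_zero : ∑' n, ‖z n - w n‖ ^ 2 ≤ 0 := by linarith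
  have hzw : ∀ n, z n = w n := by
    intro n
    have h1 : ‖z n - w n‖ ^ 2 ≤ ∑' j, ‖z j - w j‖ ^ 2 :=
      Summable.le_tsum hAzw n (fun j _ => sq_nonneg _)
    have h2 : ‖z n - w n‖ ^ 2 = 0 := le_antisymm (h1.trans hzw_zero) (sq_nonneg _)
    have h3 : ‖z n - w n‖ = 0 := by
      nlinarith [norm_nonneg (z n - w n)]
    rwa [norm_eq_zero, sub_eq_zero] at h3
  ---- conclusions
  have hzρ : ∑' n, k n * ‖z n‖ ^ 2 = ρ ^ 2 := by
    rw [tsum_congr (fun n => by rw [hzw n] : ∀ n, k n * ‖z n‖^2 = k n * ‖w n‖^2)]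
    exact hwρ
  have hmu : ∀ n, ((1 + μ * k n : ℝ) : ℂ) * z n = u n := by
    intro n; rw [hzw n]; exact (huw n).symm
  refine ⟨⟨μ / (4 * ρ), by positivity, ?_⟩, ⟨μ, hμ, hmu⟩, hzρ⟩
  intro n
  have hsqrt : Real.sqrt (∑' m, k m * ‖z m‖ ^ 2) = ρ := by
    rw [hzρ]; exact Real.sqrt_sq hρ.le
  have hcoef : 4 * (μ / (4 * ρ)) * Real.sqrt (∑' m, k m * ‖z m‖ ^ 2) * k n = μ * k n := by
    rw [hsqrt]; field_simp
  rw [hcoef, Complex.real_smul, ← hmu n]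
  push_cast
  ring
end

section
/- Lipschitz continuity of the data-to-solution difference in the linearized estimate: if û ∈ L²([0,T];V) solves dû/dt + νAû + B(u,û) + B(û,u) + B(û,û) = λh with û(0) = 0, where Re(B(u,û),û) = 0, Re(B(û,û),û) = 0, and |Re(B(û,u),û)| ≤ C|û|‖u‖_V‖û‖_V, then ‖û‖_{L²(0,T;V)} ≤ C(‖u‖_{L²(0,T;V)}, ν) |λ| ‖h‖_{L²(0,T;H)}. -/
open MeasureTheory intervalIntegral Set

/-- Abstract bootstrapped Gronwall-type lemma (integral form, iterated on pieces
where the coefficient mass is at most `1/2`). -/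
lemma gronwall_partition_aux (T A : ℝ) (hA : 0 ≤ A) (y G : ℝ → ℝ)
    (hy : ContinuousOn y (Icc 0 T))
    (hy0 : y 0 = 0) (hynn : ∀ t ∈ Icc (0:ℝ) T, 0 ≤ y t)
    (hG : ContinuousOn G (Icc 0 T)) (hG0 : G 0 = 0)
    (hGmono : ∀ s ∈ Icc (0:ℝ) T, ∀ t ∈ Icc (0:ℝ) T, s ≤ t → G s ≤ G t)
    (key : ∀ s ∈ Icc (0:ℝ) T, ∀ t ∈ Icc (0:ℝ) T, s ≤ t → ∀ M : ℝ,
      (∀ r ∈ Icc s t, y r ≤ M) → y t ≤ y s + A + (G t - G s) * M) :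
    ∀ i : ℕ, ∀ t ∈ Icc (0:ℝ) T, G t ≤ (i + 1) / 2 →
      y t ≤ ((2:ℝ) ^ (i + 2) - 2) * A := by
  intro i
  induction i with
  | zero =>
    intro t ht hGt
    have h0T : (0:ℝ) ∈ Icc (0:ℝ) T := ⟨le_refl 0, le_trans ht.1 ht.2⟩
    obtain ⟨r, hr, hrmax⟩ := (isCompact_Icc (a := (0:ℝ)) (b := t)).exists_isMaxOn
      ⟨0, le_refl 0, ht.1⟩ (hy.mono (Icc_subset_Icc le_rfl ht.2))
    have hrI : r ∈ Icc (0:ℝ) T := ⟨hr.1, hr.2.trans ht.2⟩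
    have hkey := key 0 h0T r hrI hr.1 (y r)
      (fun x hx => hrmax (⟨hx.1, hx.2.trans hr.2⟩ : x ∈ Icc (0:ℝ) t))
    rw [hy0, hG0] at hkey
    have hGr0 : 0 ≤ G r := by
      have := hGmono 0 h0T r hrI hr.1; rwa [hG0] at this
    have hGr : G r ≤ 1/2 := le_trans (hGmono r hrI t ht hr.2) (by push_cast at hGt ⊢; linarith)
    have hyr : 0 ≤ y r := hynn r hrI
    have h1 : y r ≤ 2 * A := by nlinarith
    have h2 : y t ≤ y r := hrmax (⟨ht.1, le_refl t⟩ : t ∈ Icc (0:ℝ) t)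
    have : ((2:ℝ) ^ (0 + 2) - 2) * A = 2 * A := by norm_num
    linarith [this ▸ (h2.trans h1)]
  | succ i ih =>
    intro t ht hGt
    by_cases hsmall : G t ≤ (i + 1) / 2
    · have := ih t ht hsmall
      have hpow : ((2:ℝ) ^ (i + 2) - 2) * A ≤ ((2:ℝ) ^ (i + 1 + 2) - 2) * A := by
        have h1 : ((2:ℝ)) ^ (i + 2) ≤ (2:ℝ) ^ (i + 1 + 2) :=
          pow_le_pow_right₀ one_le_two (by omega)
        nlinarith
      linarith
    · push_neg at hsmall
      have h0T : (0:ℝ) ∈ Icc (0:ℝ) T := ⟨le_refl 0, le_trans ht.1 ht.2⟩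
      -- find s ∈ [0,t] with G s = (i+1)/2 by IVT
      have hGc : ContinuousOn G (Icc 0 t) := hG.mono (Icc_subset_Icc le_rfl ht.2)
      have hmem : ((i:ℝ) + 1) / 2 ∈ Icc (G 0) (G t) := by
        constructor
        · rw [hG0]; positivity
        · exact hsmall.le
      obtain ⟨s, hs, hGs⟩ := intermediate_value_Icc ht.1 hGc hmem
      have hsI : s ∈ Icc (0:ℝ) T := ⟨hs.1, hs.2.trans ht.2⟩
      have hys : y s ≤ ((2:ℝ) ^ (i + 2) - 2) * A := ih s hsI (le_of_eq hGs)
      -- max of y on [s,t]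
      obtain ⟨r, hr, hrmax⟩ := (isCompact_Icc (a := s) (b := t)).exists_isMaxOn
        ⟨t, hs.2, le_refl t⟩ (hy.mono (Icc_subset_Icc hs.1 ht.2))
      have hrI : r ∈ Icc (0:ℝ) T := ⟨hs.1.trans hr.1, hr.2.trans ht.2⟩
      have hkey := key s hsI r hrI hr.1 (y r)
        (fun x hx => hrmax (⟨hx.1, hx.2.trans hr.2⟩ : x ∈ Icc s t))
      have hGr : G r - G s ≤ 1/2 := by
        have h1 : G r ≤ G t := hGmono r hrI t ht hr.2
        rw [hGs]
        push_cast at hGt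
        push_cast
        linarith
      have hyr : 0 ≤ y r := hynn r hrI
      have hyrb : y r ≤ 2 * y s + 2 * A := by
        have hGsr : 0 ≤ G r - G s := sub_nonneg.2 (hGmono s hsI r hrI hr.1)
        nlinarith
      have hyt : y t ≤ y r := hrmax (⟨hs.2, le_refl t⟩ : t ∈ Icc s t)
      have hpow : (2:ℝ) ^ (i + 1 + 2) = 2 * (2:ℝ) ^ (i + 2) := by ring
      calc y t ≤ y r := hyt
        _ ≤ 2 * y s + 2 * A := hyrb
        _ ≤ 2 * (((2:ℝ) ^ (i + 2) - 2) * A) + 2 * A := by linarith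
        _ = ((2:ℝ) ^ (i + 1 + 2) - 2) * A := by rw [hpow]; ring

set_option maxHeartbeats 2000000 in
/-- Lipschitz continuity of the data-to-solution difference in the
linearized estimate.  If `û` solves
`dû/dt + νAû + B(u,û) + B(û,u) + B(û,û) = λh`, `û(0) = 0`, with the
orthogonality properties `Re(B(u,û),û) = 0`, `Re(B(û,û),û) = 0`, the bound
`|Re(B(û,u),û)| ≤ C|û|‖u‖_V‖û‖_V` and `Re(Aû,û) = ‖û‖_V²`, then
`‖û‖_{L²(0,T;V)} ≤ C(‖u‖_{L²(0,T;V)}, ν) |λ| ‖h‖_{L²(0,T;H)}`,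
with a constant depending only on `‖u‖_{L²(0,T;V)}`, `ν` (and the fixed data). -/
theorem linearized_solution_lipschitz_estimate
    (H : Type*) [NormedAddCommGroup H] [InnerProductSpace ℝ H] [CompleteSpace H]
    (T ν Cb : ℝ) (hT : 0 < T) (hν : 0 < ν) (hCb : 0 ≤ Cb)
    (nVu : ℝ → ℝ)  -- `t ↦ ‖u(t)‖_V` for the fixed reference solution `u`
    (hnVu : IntervalIntegrable (fun t => (nVu t) ^ 2) MeasureTheory.volume 0 T) :
    ∃ C > 0, ∀ (lam : ℝ) (h uhat D Auh B1 B2 B3 : ℝ → H) (nVhat : ℝ → ℝ),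
      (∀ t ∈ Set.Icc (0 : ℝ) T, HasDerivAt uhat (D t) t) →
      (∀ t ∈ Set.Icc (0 : ℝ) T,
        D t + ν • Auh t + B1 t + B2 t + B3 t = lam • h t) →
      uhat 0 = 0 →
      (∀ t ∈ Set.Icc (0 : ℝ) T, 0 ≤ nVhat t) →
      (∀ t ∈ Set.Icc (0 : ℝ) T, (inner ℝ (Auh t) (uhat t) : ℝ) = (nVhat t) ^ 2) →
      (∀ t ∈ Set.Icc (0 : ℝ) T, (inner ℝ (B1 t) (uhat t) : ℝ) = 0) →
      (∀ t ∈ Set.Icc (0 : ℝ) T, (inner ℝ (B3 t) (uhat t) : ℝ) = 0) →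
      (∀ t ∈ Set.Icc (0 : ℝ) T,
        |(inner ℝ (B2 t) (uhat t) : ℝ)| ≤ Cb * ‖uhat t‖ * nVu t * nVhat t) →
      IntervalIntegrable (fun t => ‖h t‖ ^ 2) MeasureTheory.volume 0 T →
      IntervalIntegrable (fun t => (nVhat t) ^ 2) MeasureTheory.volume 0 T →
      Real.sqrt (∫ t in (0 : ℝ)..T, (nVhat t) ^ 2)
        ≤ C * |lam| * Real.sqrt (∫ t in (0 : ℝ)..T, ‖h t‖ ^ 2) := by
  classical
  -- the Gronwall coefficient, depending only on fixed data
  set g : ℝ → ℝ := fun t => Cb ^ 2 / ν * (nVu t) ^ 2 + 1 with hgdef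
  have hgint : IntervalIntegrable g volume 0 T :=
    (hnVu.const_mul _).add intervalIntegrable_const
  have hgnn : ∀ t, 1 ≤ g t := fun t => by
    have : 0 ≤ Cb ^ 2 / ν * (nVu t) ^ 2 := by positivity
    simp only [hgdef]; linarith
  set G : ℝ → ℝ := fun t => ∫ s in (0:ℝ)..t, g s with hGdef
  have hGcont : ContinuousOn G (Icc 0 T) := by
    have := continuousOn_primitive_interval' (a := 0) hgint left_mem_uIcc
    rwa [uIcc_of_le hT.le] at this
  have hG0 : G 0 = 0 := integral_same
  have hGdiff : ∀ s t : ℝ, 0 ≤ s → s ≤ t → t ≤ T →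
      G t - G s = ∫ r in s..t, g r := by
    intro s t hs hst htT
    have h1 : IntervalIntegrable g volume 0 s := hgint.mono_set
      (by rw [uIcc_of_le hs, uIcc_of_le hT.le]; exact Icc_subset_Icc le_rfl (hst.trans htT))
    have h2 : IntervalIntegrable g volume s t := hgint.mono_set
      (by rw [uIcc_of_le hst, uIcc_of_le hT.le]; exact Icc_subset_Icc hs htT)
    have := integral_add_adjacent_intervals h1 h2
    simp only [hGdef]
    linarith
  have hGmono : ∀ s ∈ Icc (0:ℝ) T, ∀ t ∈ Icc (0:ℝ) T, s ≤ t → G s ≤ G t := by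
    intro s hs t ht hst
    have h := hGdiff s t hs.1 hst ht.2
    have hnn : 0 ≤ ∫ r in s..t, g r :=
      integral_nonneg hst (fun x _ => le_trans zero_le_one (hgnn x))
    linarith
  set J : ℝ := G T with hJdef
  have hJT : T ≤ J := by
    have h0 : G T - G 0 = ∫ r in (0:ℝ)..T, g r := hGdiff 0 T le_rfl hT.le le_rfl
    have h1 : (∫ r in (0:ℝ)..T, (1:ℝ)) ≤ ∫ r in (0:ℝ)..T, g r :=
      integral_mono_on hT.le intervalIntegrable_const hgint (fun x _ => hgnn x)
    simp only [integral_one] at h1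
    rw [hG0] at h0
    simp only [hJdef]; linarith
  have hJpos : 0 < J := hT.trans_le hJT
  set N : ℕ := ⌈2 * J⌉₊ with hNdef
  have hNJ : J ≤ ((N:ℝ) + 1) / 2 := by
    have := Nat.le_ceil (2 * J)
    rw [← hNdef] at this
    linarith
  have hpowN : (2:ℝ) ≤ (2:ℝ) ^ (N + 2) - 2 := by
    have h1 : (1:ℝ) ≤ (2:ℝ) ^ N := one_le_pow₀ one_le_two
    have : (2:ℝ) ^ (N + 2) = (2:ℝ) ^ N * 4 := by ring
    nlinarith
  set C₁ : ℝ := (((2:ℝ) ^ (N + 2) - 2) * J + 1) / ν with hC₁def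
  have hC₁pos : 0 < C₁ := by
    have : 0 < ((2:ℝ) ^ (N + 2) - 2) * J := by nlinarith
    positivity
  refine ⟨Real.sqrt C₁, Real.sqrt_pos.2 hC₁pos, ?_⟩
  intro lam h uhat D Auh B1 B2 B3 nVhat hD heq hu0 hVnn hAu hB1 hB3 hB2 hh hV
  -- basic objects
  set y : ℝ → ℝ := fun t => ‖uhat t‖ ^ 2 with hydef
  have huc : ContinuousOn uhat (Icc 0 T) :=
    fun t ht => (hD t ht).continuousAt.continuousWithinAt
  have hyc : ContinuousOn y (Icc 0 T) := (huc.norm).pow 2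
  have hy0 : y 0 = 0 := by simp [hydef, hu0]
  have hynn : ∀ t ∈ Icc (0:ℝ) T, 0 ≤ y t := fun t _ => by positivity
  set c : ℝ → ℝ := fun t => lam ^ 2 * ‖h t‖ ^ 2 with hcdef
  have hcnn : ∀ t, 0 ≤ c t := fun t => by positivity
  have hcint : IntervalIntegrable c volume 0 T := hh.const_mul _
  set A : ℝ := ∫ t in (0:ℝ)..T, c t with hAdef
  have hAnn : 0 ≤ A := integral_nonneg hT.le (fun x _ => hcnn x)
  set e : ℝ → ℝ := fun t => 2 * (lam * (inner ℝ (h t) (uhat t) : ℝ))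
      - 2 * ν * (nVhat t) ^ 2 - 2 * (inner ℝ (B2 t) (uhat t) : ℝ) with hedef
  -- derivative of y
  have hyd : ∀ t ∈ Icc (0:ℝ) T, HasDerivAt y (e t) t := by
    intro t ht
    have h1 : HasDerivAt (fun s => (inner ℝ (uhat s) (uhat s) : ℝ))
        ((inner ℝ (uhat t) (D t) : ℝ) + (inner ℝ (D t) (uhat t) : ℝ)) t :=
      (hD t ht).inner ℝ (hD t ht)
    have hDu : (inner ℝ (D t) (uhat t) : ℝ)
        = lam * (inner ℝ (h t) (uhat t) : ℝ) - ν * (nVhat t) ^ 2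
          - (inner ℝ (B2 t) (uhat t) : ℝ) := by
      have hci := congrArg (fun z : H => (inner ℝ z (uhat t) : ℝ)) (heq t ht)
      simp only [inner_add_left, real_inner_smul_left] at hci
      rw [hAu t ht, hB1 t ht, hB3 t ht] at hci
      linarith
    have h2 : (inner ℝ (uhat t) (D t) : ℝ) + (inner ℝ (D t) (uhat t) : ℝ) = e t := by
      have hc : (inner ℝ (uhat t) (D t) : ℝ) = (inner ℝ (D t) (uhat t) : ℝ) :=
        real_inner_comm _ _
      simp only [hedef]
      rw [hc, hDu]; ring
    rw [h2] at h1
    have h3 : (fun s => (inner ℝ (uhat s) (uhat s) : ℝ)) = y := by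
      funext s; rw [real_inner_self_eq_norm_sq]
    rwa [h3] at h1
  -- pointwise bounds on e
  set phi : ℝ → ℝ := fun t => g t * y t + c t - ν * (nVhat t) ^ 2 with hphidef
  set psi : ℝ → ℝ := fun t => g t * y t + c t + 3 * ν * (nVhat t) ^ 2 with hpsidef
  have hbounds : ∀ t ∈ Icc (0:ℝ) T, e t ≤ phi t ∧ |e t| ≤ psi t := by
    intro t ht
    have CS : |(inner ℝ (h t) (uhat t) : ℝ)| ≤ ‖h t‖ * ‖uhat t‖ := abs_real_inner_le_norm _ _
    have hb2 := hB2 t ht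
    have hv := hVnn t ht
    have h1 : lam * (inner ℝ (h t) (uhat t) : ℝ) ≤ |lam| * (‖h t‖ * ‖uhat t‖) := by
      calc lam * (inner ℝ (h t) (uhat t) : ℝ) ≤ |lam * (inner ℝ (h t) (uhat t) : ℝ)| :=
            le_abs_self _
        _ = |lam| * |(inner ℝ (h t) (uhat t) : ℝ)| := abs_mul _ _
        _ ≤ |lam| * (‖h t‖ * ‖uhat t‖) := by
            exact mul_le_mul_of_nonneg_left CS (abs_nonneg lam)
    have h1' : -(lam * (inner ℝ (h t) (uhat t) : ℝ)) ≤ |lam| * (‖h t‖ * ‖uhat t‖) := by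
      calc -(lam * (inner ℝ (h t) (uhat t) : ℝ)) ≤ |lam * (inner ℝ (h t) (uhat t) : ℝ)| :=
            neg_le_abs _
        _ = |lam| * |(inner ℝ (h t) (uhat t) : ℝ)| := abs_mul _ _
        _ ≤ |lam| * (‖h t‖ * ‖uhat t‖) := mul_le_mul_of_nonneg_left CS (abs_nonneg lam)
    have hyoung1 : 2 * (|lam| * (‖h t‖ * ‖uhat t‖)) ≤ lam ^ 2 * ‖h t‖ ^ 2 + ‖uhat t‖ ^ 2 := by
      nlinarith [sq_nonneg (|lam| * ‖h t‖ - ‖uhat t‖), sq_abs lam]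
    have h2 : -(inner ℝ (B2 t) (uhat t) : ℝ) ≤ Cb * ‖uhat t‖ * nVu t * nVhat t :=
      (neg_le_abs _).trans hb2
    have h2' : (inner ℝ (B2 t) (uhat t) : ℝ) ≤ Cb * ‖uhat t‖ * nVu t * nVhat t :=
      (le_abs_self _).trans hb2
    have hyoung2 : 2 * (Cb * ‖uhat t‖ * nVu t * nVhat t)
        ≤ (Cb * ‖uhat t‖ * nVu t) ^ 2 / ν + ν * (nVhat t) ^ 2 := by
      have hid : (Cb * ‖uhat t‖ * nVu t) ^ 2 / ν + ν * (nVhat t) ^ 2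
          - 2 * (Cb * ‖uhat t‖ * nVu t * nVhat t)
          = (Cb * ‖uhat t‖ * nVu t - ν * nVhat t) ^ 2 / ν := by
        field_simp; ring
      nlinarith [div_nonneg (sq_nonneg (Cb * ‖uhat t‖ * nVu t - ν * nVhat t)) hν.le]
    have hid2 : (Cb * ‖uhat t‖ * nVu t) ^ 2 / ν = Cb ^ 2 / ν * (nVu t) ^ 2 * ‖uhat t‖ ^ 2 := by
      field_simp
    have hgy : g t * y t = Cb ^ 2 / ν * (nVu t) ^ 2 * ‖uhat t‖ ^ 2 + ‖uhat t‖ ^ 2 := by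
      simp only [hgdef, hydef]; ring
    have hνV : 0 ≤ ν * (nVhat t) ^ 2 := mul_nonneg hν.le (sq_nonneg _)
    have hy2 := hyoung2
    rw [hid2] at hy2
    constructor
    · simp only [hedef, hphidef, hcdef, hgy]
      linarith
    · rw [abs_le]
      constructor
      · simp only [hedef, hpsidef, hcdef, hgy]
        linarith
      · simp only [hedef, hpsidef, hcdef, hgy]
        linarith
  -- integrability of the pieces
  have hgyint : IntervalIntegrable (fun t => g t * y t) volume 0 T :=
    hgint.mul_continuousOn (by rw [uIcc_of_le hT.le]; exact hyc)
  have hphint : IntervalIntegrable phi volume 0 T :=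
    (hgyint.add hcint).sub (hV.const_mul ν)
  have hpsint : IntervalIntegrable psi volume 0 T :=
    (hgyint.add hcint).add (hV.const_mul (3 * ν))
  -- measurability of e via the clamped function
  set v : ℝ → H := fun r => uhat (max 0 (min r T)) with hvdef
  have hvc : Continuous v := by
    have hclamp : Continuous (fun r : ℝ => max 0 (min r T)) :=
      continuous_const.max (continuous_id.min continuous_const)
    exact huc.comp_continuous hclamp
      (fun r => ⟨le_max_left _ _, max_le hT.le (min_le_right _ _)⟩)
  set ytil : ℝ → ℝ := fun r => ‖v r‖ ^ 2 with hytdef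
  have hagree : ∀ r ∈ Ioo (0:ℝ) T, deriv ytil r = e r := by
    intro r hr
    have hev : ytil =ᶠ[nhds r] y := by
      filter_upwards [Ioo_mem_nhds hr.1 hr.2] with x hx
      simp only [hytdef, hvdef, hydef, min_eq_left hx.2.le, max_eq_right hx.1.le]
    have hd : HasDerivAt ytil (e r) r :=
      (hyd r (Ioo_subset_Icc_self hr)).congr_of_eventuallyEq hev
    exact hd.deriv
  -- integrability of e on subintervals, and fundamental theorem of calculus
  have heint : ∀ s t : ℝ, 0 ≤ s → s ≤ t → t ≤ T → IntervalIntegrable e volume s t := by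
    intro s t hs hst htT
    have hm : AEStronglyMeasurable e (volume.restrict (uIoc s t)) := by
      rw [uIoc_of_le hst]
      refine ((measurable_deriv ytil).aestronglyMeasurable.restrict).congr ?_
      change deriv ytil =ᵐ[volume.restrict (Ioc s t)] e
      rw [Filter.EventuallyEq, ae_iff]
      rw [Measure.restrict_apply' measurableSet_Ioc]
      refine measure_mono_null ?_ (measure_singleton T)
      rintro x ⟨hbad, hx⟩
      simp only [mem_setOf_eq] at hbad
      by_contra hxT
      simp only [mem_singleton_iff] at hxT
      exact hbad (hagree x ⟨lt_of_le_of_lt hs hx.1, lt_of_le_of_ne (hx.2.trans htT) hxT⟩)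
    have hpsist : IntervalIntegrable psi volume s t := hpsint.mono_set
      (by rw [uIcc_of_le hst, uIcc_of_le hT.le]; exact Icc_subset_Icc hs htT)
    refine hpsist.mono_fun hm ?_
    rw [uIoc_of_le hst]
    refine ae_restrict_of_forall_mem measurableSet_Ioc (fun x hx => ?_)
    have hxI : x ∈ Icc (0:ℝ) T := ⟨hs.trans hx.1.le, hx.2.trans htT⟩
    have := (hbounds x hxI).2
    simp only [Real.norm_eq_abs]
    exact this.trans (le_abs_self _)
  have hFTC : ∀ s t : ℝ, 0 ≤ s → s ≤ t → t ≤ T → y t - y s = ∫ r in s..t, e r := by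
    intro s t hs hst htT
    have hsub : uIcc s t ⊆ Icc (0:ℝ) T := by
      rw [uIcc_of_le hst]; exact Icc_subset_Icc hs htT
    exact (integral_eq_sub_of_hasDerivAt (fun x hx => hyd x (hsub hx))
      (heint s t hs hst htT)).symm
  -- the key integral inequality
  have key : ∀ s ∈ Icc (0:ℝ) T, ∀ t ∈ Icc (0:ℝ) T, s ≤ t → ∀ M : ℝ,
      (∀ r ∈ Icc s t, y r ≤ M) → y t ≤ y s + A + (G t - G s) * M := by
    intro s hs t ht hst M hM
    have hsub : uIcc s t ⊆ uIcc (0:ℝ) T := by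
      rw [uIcc_of_le hst, uIcc_of_le hT.le]; exact Icc_subset_Icc hs.1 ht.2
    have hphist : IntervalIntegrable phi volume s t := hphint.mono_set hsub
    have hgyst : IntervalIntegrable (fun r => g r * y r) volume s t := hgyint.mono_set hsub
    have hcst : IntervalIntegrable c volume s t := hcint.mono_set hsub
    have hVst : IntervalIntegrable (fun r => (nVhat r) ^ 2) volume s t := hV.mono_set hsub
    have hgst : IntervalIntegrable g volume s t := hgint.mono_set hsub
    have h1 : y t - y s ≤ ∫ r in s..t, phi r := by
      rw [hFTC s t hs.1 hst ht.2]
      exact integral_mono_on hst (heint s t hs.1 hst ht.2) hphist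
        (fun x hx => (hbounds x ⟨hs.1.trans hx.1, hx.2.trans ht.2⟩).1)
    have h2 : (∫ r in s..t, phi r)
        = (∫ r in s..t, g r * y r) + (∫ r in s..t, c r) - ν * ∫ r in s..t, (nVhat r) ^ 2 := by
      have := integral_sub (hgyst.add hcst) (hVst.const_mul ν)
      rw [← integral_add hgyst hcst, ← intervalIntegral.integral_const_mul]
      rw [← this]
    have h3 : (∫ r in s..t, g r * y r) ≤ (G t - G s) * M := by
      have hmono : (∫ r in s..t, g r * y r) ≤ ∫ r in s..t, g r * M := by
        refine integral_mono_on hst hgyst (hgst.mul_const M) (fun x hx => ?_)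
        have hgx : 0 ≤ g x := le_trans zero_le_one (hgnn x)
        exact mul_le_mul_of_nonneg_left (hM x hx) hgx
      rw [intervalIntegral.integral_mul_const, ← hGdiff s t hs.1 hst ht.2] at hmono
      exact hmono
    have h4 : (∫ r in s..t, c r) ≤ A := by
      have hi1 : IntervalIntegrable c volume 0 s := hcint.mono_set
        (by rw [uIcc_of_le hs.1, uIcc_of_le hT.le]; exact Icc_subset_Icc le_rfl hs.2)
      have hi3 : IntervalIntegrable c volume t T := hcint.mono_set
        (by rw [uIcc_of_le ht.2, uIcc_of_le hT.le]; exact Icc_subset_Icc ht.1 le_rfl)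
      have e1 : (∫ r in (0:ℝ)..s, c r) + (∫ r in s..t, c r) = ∫ r in (0:ℝ)..t, c r :=
        integral_add_adjacent_intervals hi1 hcst
      have e2 : (∫ r in (0:ℝ)..t, c r) + (∫ r in t..T, c r) = ∫ r in (0:ℝ)..T, c r :=
        integral_add_adjacent_intervals (hi1.trans hcst) hi3
      have n1 : 0 ≤ ∫ r in (0:ℝ)..s, c r := integral_nonneg hs.1 (fun x _ => hcnn x)
      have n3 : 0 ≤ ∫ r in t..T, c r := integral_nonneg ht.2 (fun x _ => hcnn x)
      simp only [hAdef]
      linarith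
    have h5 : 0 ≤ ν * ∫ r in s..t, (nVhat r) ^ 2 :=
      mul_nonneg hν.le (integral_nonneg hst (fun x _ => sq_nonneg _))
    linarith
  -- apply the Gronwall lemma
  set Ky : ℝ := ((2:ℝ) ^ (N + 2) - 2) * A with hKydef
  have hybound : ∀ t ∈ Icc (0:ℝ) T, y t ≤ Ky := by
    intro t ht
    refine gronwall_partition_aux T A hAnn y G hyc hy0 hynn hGcont hG0 hGmono key N t ht ?_
    have : G t ≤ J := hGmono t ht T ⟨hT.le, le_rfl⟩ ht.2
    linarith
  -- final energy estimate on [0,T]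
  set I : ℝ := ∫ t in (0:ℝ)..T, (nVhat t) ^ 2 with hIdef
  have hInn : 0 ≤ I := integral_nonneg hT.le (fun x _ => sq_nonneg _)
  have hIh : (0:ℝ) ≤ ∫ t in (0:ℝ)..T, ‖h t‖ ^ 2 := integral_nonneg hT.le (fun x _ => sq_nonneg _)
  have hmain : ν * I ≤ Ky * J + A := by
    have h1 : y T - y 0 ≤ ∫ r in (0:ℝ)..T, phi r := by
      rw [hFTC 0 T le_rfl hT.le le_rfl]
      exact integral_mono_on hT.le (heint 0 T le_rfl hT.le le_rfl) hphint
        (fun x hx => (hbounds x hx).1)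
    have h2 : (∫ r in (0:ℝ)..T, phi r)
        = (∫ r in (0:ℝ)..T, g r * y r) + A - ν * I := by
      have hsub := integral_sub (hgyint.add hcint) (hV.const_mul ν)
      simp only [hAdef, hIdef]
      rw [← integral_add hgyint hcint, ← intervalIntegral.integral_const_mul]
      rw [← hsub]
    have h3 : (∫ r in (0:ℝ)..T, g r * y r) ≤ Ky * J := by
      have hmono : (∫ r in (0:ℝ)..T, g r * y r) ≤ ∫ r in (0:ℝ)..T, g r * Ky :=
        integral_mono_on hT.le hgyint (hgint.mul_const Ky)
          (fun x hx => mul_le_mul_of_nonneg_left (hybound x hx)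
            (le_trans zero_le_one (hgnn x)))
      rw [intervalIntegral.integral_mul_const] at hmono
      have h' := hGdiff 0 T le_rfl hT.le le_rfl
      rw [hG0, sub_zero] at h'
      rw [← h'] at hmono
      linarith [hmono, mul_comm J Ky]
    have hyT : 0 ≤ y T := hynn T ⟨hT.le, le_rfl⟩
    rw [hy0] at h1
    linarith
  have hA' : A = lam ^ 2 * ∫ t in (0:ℝ)..T, ‖h t‖ ^ 2 := by
    simp only [hAdef, hcdef]
    rw [intervalIntegral.integral_const_mul]
  have hIle : I ≤ C₁ * (lam ^ 2 * ∫ t in (0:ℝ)..T, ‖h t‖ ^ 2) := by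
    have hstep : ν * I ≤ (((2:ℝ) ^ (N + 2) - 2) * J + 1) * A := by
      calc ν * I ≤ Ky * J + A := hmain
        _ = (((2:ℝ) ^ (N + 2) - 2) * J + 1) * A := by rw [hKydef]; ring
    have hC : C₁ * A * ν = (((2:ℝ) ^ (N + 2) - 2) * J + 1) * A := by
      rw [hC₁def]; field_simp
    have hfin : I ≤ C₁ * A := by
      have h1 : I * ν ≤ (C₁ * A) * ν := by nlinarith
      exact le_of_mul_le_mul_right h1 hν
    rwa [hA'] at hfin
  calc Real.sqrt I ≤ Real.sqrt (C₁ * (lam ^ 2 * ∫ t in (0:ℝ)..T, ‖h t‖ ^ 2)) :=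
        Real.sqrt_le_sqrt hIle
    _ = Real.sqrt C₁ * (Real.sqrt (lam ^ 2) * Real.sqrt (∫ t in (0:ℝ)..T, ‖h t‖ ^ 2)) := by
        rw [Real.sqrt_mul hC₁pos.le, Real.sqrt_mul (sq_nonneg lam)]
    _ = Real.sqrt C₁ * |lam| * Real.sqrt (∫ t in (0:ℝ)..T, ‖h t‖ ^ 2) := by
        rw [Real.sqrt_sq_eq_abs]; ring
end
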